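/- arXiv:2310.04062 — 8 statements merged into one kernel-verified Lean document; each statement's English description precedes it below -/
import Mathlib

section
/- Let s ∈ [0,1). If u₁ and u₂ are both solutions at level s, then u₁ = u₂. -/
open Real Set Filter MeasureTheory

/-- `J(x) = ∏ i sinh (cᵢ x)`. -/
noncomputable def Jfun (r : ℕ) (c : Fin r → ℝ) (x : ℝ) : ℝ :=
  ∏ i, Real.sinh (c i * x)

/-- `j = - log J`. -/
noncomputable def jfun (r : ℕ) (c : Fin r → ℝ) (x : ℝ) : ℝ :=
  - Real.log (Jfun r c x)

/-- A solution at level `s`: a smooth even function `u` with `u'' > 0`, whose derivative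
maps `[0,∞)` onto `[0, λ - s)`, satisfying `u'' v(u') = e^{-2u} J` on `(0,∞)`. -/
def IsSolution (r : ℕ) (c : Fin r → ℝ) (v : ℝ → ℝ) (lam s : ℝ) (u : ℝ → ℝ) : Prop :=
  ContDiff ℝ (⊤ : ℕ∞) u ∧ (∀ x, u (-x) = u x) ∧ (∀ x, 0 < deriv (deriv u) x) ∧
  deriv u '' Set.Ici (0:ℝ) = Set.Ico 0 (lam - s) ∧
  ∀ x, 0 < x → deriv (deriv u) x * v (deriv u x) = Real.exp (-(2 * u x)) * Jfun r c x

section JJ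
variable {r : ℕ} {c : Fin r → ℝ}

noncomputable def Jd (r : ℕ) (c : Fin r → ℝ) (x : ℝ) : ℝ :=
  ∑ i, (∏ j ∈ Finset.univ.erase i, Real.sinh (c j * x)) * (c i * Real.cosh (c i * x))

lemma Jfun_pos (hc : ∀ i, 0 < c i) {x : ℝ} (hx : 0 < x) : 0 < Jfun r c x :=
  Finset.prod_pos fun i _ => Real.sinh_pos_iff.2 (mul_pos (hc i) hx)

lemma Jfun_nonneg (hc : ∀ i, 0 < c i) {x : ℝ} (hx : 0 ≤ x) : 0 ≤ Jfun r c x :=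
  Finset.prod_nonneg fun i _ => Real.sinh_nonneg_iff.2 (mul_nonneg (hc i).le hx)

lemma hasDerivAt_Jfun (x : ℝ) : HasDerivAt (Jfun r c) (Jd r c x) x := by
  have h : ∀ i ∈ Finset.univ, HasDerivAt (fun y => Real.sinh (c i * y))
      (c i * Real.cosh (c i * x)) x := by
    intro i _
    have h1 : HasDerivAt (fun y : ℝ => c i * y) (c i) x := by
      simpa using (hasDerivAt_id x).const_mul (c i)
    exact ((Real.hasDerivAt_sinh (c i * x)).comp x h1).congr_deriv (by ring)
  have := HasDerivAt.fun_finsetProd h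
  exact (by simpa [Jd, smul_eq_mul] using this : HasDerivAt (fun y => ∏ i, Real.sinh (c i * y)) (Jd r c x) x)

lemma Jfun_le_exp (hc : ∀ i, 0 < c i) {x : ℝ} (hx : 0 ≤ x) :
    Jfun r c x ≤ Real.exp ((∑ i, c i) * x) := by
  have h1 : Jfun r c x ≤ ∏ i, Real.exp (c i * x) := by
    apply Finset.prod_le_prod
    · exact fun i _ => Real.sinh_nonneg_iff.2 (mul_nonneg (hc i).le hx)
    · intro i _
      rw [Real.sinh_eq]
      have := Real.exp_pos (-(c i * x))
      linarith [Real.exp_pos (c i * x)]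
  calc Jfun r c x ≤ ∏ i, Real.exp (c i * x) := h1
    _ = Real.exp (∑ i, c i * x) := by rw [Real.exp_sum]
    _ = Real.exp ((∑ i, c i) * x) := by rw [Finset.sum_mul]

/-- `φ = J'/J`. -/
noncomputable def phiJ (r : ℕ) (c : Fin r → ℝ) (x : ℝ) : ℝ := Jd r c x / Jfun r c x

lemma phiJ_eq (hc : ∀ i, 0 < c i) {x : ℝ} (hx : 0 < x) :
    phiJ r c x = ∑ i, c i * (Real.cosh (c i * x) / Real.sinh (c i * x)) := by
  have hJ : Jfun r c x ≠ 0 := (Jfun_pos hc hx).ne'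
  rw [phiJ, div_eq_iff hJ, Finset.sum_mul, Jd]
  apply Finset.sum_congr rfl
  intro i _
  have hsi : Real.sinh (c i * x) ≠ 0 := (Real.sinh_pos_iff.2 (mul_pos (hc i) hx)).ne'
  have : Jfun r c x = Real.sinh (c i * x) * ∏ j ∈ Finset.univ.erase i, Real.sinh (c j * x) := by
    rw [Jfun, ← Finset.mul_prod_erase Finset.univ _ (Finset.mem_univ i)]
  rw [this]
  generalize Real.sinh (c i * x) = S at hsi ⊢
  generalize (∏ j ∈ Finset.univ.erase i, Real.sinh (c j * x)) = P
  generalize Real.cosh (c i * x) = C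
  field_simp

lemma phiJ_strictAnti (hr : 1 ≤ r) (hc : ∀ i, 0 < c i) {x y : ℝ} (hx : 0 < x) (hxy : x < y) :
    phiJ r c y < phiJ r c x := by
  have hy : 0 < y := hx.trans hxy
  rw [phiJ_eq hc hx, phiJ_eq hc hy]
  have : Nonempty (Fin r) := ⟨⟨0, hr⟩⟩
  apply Finset.sum_lt_sum_of_nonempty Finset.univ_nonempty
  intro i _
  apply mul_lt_mul_of_pos_left _ (hc i)
  rw [div_lt_div_iff₀ (Real.sinh_pos_iff.2 (mul_pos (hc i) hy)) (Real.sinh_pos_iff.2 (mul_pos (hc i) hx))]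
  have h5 : 0 < Real.sinh (c i * y - c i * x) := by
    apply Real.sinh_pos_iff.2; nlinarith [hc i]
  rw [Real.sinh_sub] at h5
  nlinarith

end JJ

/-- `F = e^{-2u} J`. -/
noncomputable def Ffun (r : ℕ) (c : Fin r → ℝ) (u : ℝ → ℝ) (x : ℝ) : ℝ :=
  Real.exp (-(2 * u x)) * Jfun r c x

section Sol

variable {r : ℕ} {c : Fin r → ℝ} {v : ℝ → ℝ} {lam s : ℝ} {u : ℝ → ℝ}

lemma IsSolution.diff (h : IsSolution r c v lam s u) : Differentiable ℝ u :=
  h.1.differentiable (by simp)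

lemma IsSolution.diff1 (h : IsSolution r c v lam s u) : Differentiable ℝ (deriv u) :=
  ((contDiff_infty_iff_deriv.1 (h.1.of_le (by simp))).2).differentiable (by simp)

lemma IsSolution.deriv_odd (h : IsSolution r c v lam s u) (x : ℝ) :
    deriv u (-x) = - deriv u x := by
  have he : (fun y => u (-y)) = u := funext h.2.1
  have h2 : deriv (fun y => u (-y)) x = - deriv u (-x) := deriv_comp_neg u x
  rw [he] at h2
  linarith

lemma IsSolution.deriv_zero (h : IsSolution r c v lam s u) : deriv u 0 = 0 := by
  have := h.deriv_odd 0
  simp at this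
  linarith

lemma IsSolution.sm (h : IsSolution r c v lam s u) : StrictMono (deriv u) :=
  strictMono_of_deriv_pos h.2.2.1

lemma IsSolution.mem_Ico (h : IsSolution r c v lam s u) {x : ℝ} (hx : 0 ≤ x) :
    deriv u x ∈ Set.Ico 0 (lam - s) := by
  rw [← h.2.2.2.1]; exact ⟨x, hx, rfl⟩

lemma IsSolution.deriv_pos (h : IsSolution r c v lam s u) {x : ℝ} (hx : 0 < x) :
    0 < deriv u x := by
  have := h.sm hx  -- deriv u 0 < deriv u x ?  no: hx : 0 < x gives h.sm hx : deriv u 0 < deriv u x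
  rwa [h.deriv_zero] at this

lemma IsSolution.deriv_lt (h : IsSolution r c v lam s u) (x : ℝ) :
    deriv u x < lam - s := by
  rcases le_or_gt 0 x with hx | hx
  · exact (h.mem_Ico hx).2
  · have h0 : deriv u x < deriv u 0 := h.sm hx
    rw [h.deriv_zero] at h0
    have hL : (0:ℝ) ∈ Set.Ico (0:ℝ) (lam - s) := by rw [← h.2.2.2.1]; exact ⟨0, Set.mem_Ici.2 (le_refl _), h.deriv_zero⟩
    exact h0.trans hL.2

lemma IsSolution.surj (h : IsSolution r c v lam s u) {q : ℝ} (hq : q ∈ Set.Ico 0 (lam - s)) :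
    ∃ x, 0 ≤ x ∧ deriv u x = q := by
  rw [← h.2.2.2.1] at hq
  obtain ⟨x, hx, hxq⟩ := hq
  exact ⟨x, hx, hxq⟩

lemma IsSolution.tendsto_deriv (h : IsSolution r c v lam s u) :
    Tendsto (deriv u) atTop (nhds (lam - s)) := by
  have hbdd : BddAbove (Set.range (deriv u)) := ⟨lam - s, by
    rintro y ⟨x, rfl⟩; exact (h.deriv_lt x).le⟩
  have hmono := h.sm.monotone
  have h1 := tendsto_atTop_ciSup hmono hbdd
  have h2 : (⨆ x, deriv u x) = lam - s := by
    apply le_antisymm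
    · exact ciSup_le fun x => (h.deriv_lt x).le
    · by_contra hlt
      push_neg at hlt
      set M := ⨆ x, deriv u x with hM
      have hM0 : 0 ≤ M := by
        have := le_ciSup hbdd (0:ℝ)
        rw [h.deriv_zero] at this
        linarith
      set q := (M + (lam - s)) / 2 with hq
      obtain ⟨x, _, hxq⟩ := h.surj (q := q) ⟨by simp only [hq]; linarith, by simp only [hq]; linarith⟩
      have := le_ciSup hbdd x
      rw [hxq] at this
      simp only [hq] at this
      linarith
  rwa [h2] at h1

lemma IsSolution.Ffun_pos (h : IsSolution r c v lam s u) (hc : ∀ i, 0 < c i) {x : ℝ}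
    (hx : 0 < x) : 0 < Ffun r c u x :=
  mul_pos (Real.exp_pos _) (Jfun_pos hc hx)

lemma IsSolution.hasDerivAt_Ffun (h : IsSolution r c v lam s u) (x : ℝ) :
    HasDerivAt (Ffun r c u)
      (Real.exp (-(2 * u x)) * (Jd r c x - 2 * deriv u x * Jfun r c x)) x := by
  have h1 : HasDerivAt (fun y => -(2 * u y)) (-(2 * deriv u x)) x := by
    exact (((h.diff x).hasDerivAt.const_mul 2).neg).congr_deriv (by ring)
  have h2 : HasDerivAt (fun y => Real.exp (-(2 * u y)))
      (Real.exp (-(2 * u x)) * (-(2 * deriv u x))) x := by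
    simpa [Function.comp_def] using (Real.hasDerivAt_exp (-(2 * u x))).comp x h1
  have h3 := h2.mul (hasDerivAt_Jfun (r := r) (c := c) x)
  exact h3.congr_deriv (by ring)

/-- second derivative via the ODE -/
lemma IsSolution.deriv2_eq (h : IsSolution r c v lam s u)
    (hvpos : ∀ p ∈ Set.Ioo (0:ℝ) lam, 0 < v p) (hs0 : 0 ≤ s) {x : ℝ} (hx : 0 < x) :
    0 < v (deriv u x) ∧ deriv (deriv u) x = Ffun r c u x / v (deriv u x) := by
  have hmem : deriv u x ∈ Set.Ioo (0:ℝ) lam :=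
    ⟨h.deriv_pos hx, lt_of_lt_of_le (h.deriv_lt x) (by linarith)⟩
  have hv := hvpos _ hmem
  refine ⟨hv, ?_⟩
  have := h.2.2.2.2 x hx
  rw [Ffun, ← this]
  field_simp

lemma IsSolution.tendsto_Ffun (h : IsSolution r c v lam s u) (hc : ∀ i, 0 < c i)
    (hlam : lam = 1 + (1/2) * ∑ i, c i) (hs1 : s < 1) :
    Tendsto (Ffun r c u) atTop (nhds 0) := by
  set σ := ∑ i, c i with hσ
  have hσL : σ / 2 < lam - s := by rw [hlam]; linarith
  obtain ⟨x₀, hx₀pos, hx₀⟩ : ∃ x₀, 0 < x₀ ∧ σ / 2 < deriv u x₀ := by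
    have h1 := (h.tendsto_deriv.eventually (eventually_gt_nhds hσL)).and
      (eventually_gt_atTop 0)
    obtain ⟨x₀, h1, h2⟩ := h1.exists
    exact ⟨x₀, h2, h1⟩
  set p₀ := deriv u x₀ with hp₀
  -- for x ≥ x₀ : u x ≥ u x₀ + p₀ (x - x₀)
  have key : ∀ x, x₀ ≤ x → u x₀ + p₀ * (x - x₀) ≤ u x := by
    intro x hx
    rcases eq_or_lt_of_le hx with rfl | hlt
    · simp
    · obtain ⟨ζ, hζ, hζ2⟩ := exists_hasDerivAt_eq_slope u (deriv u) hlt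
        (h.diff.continuous.continuousOn) (fun y _ => (h.diff y).hasDerivAt)
      have h4 : p₀ ≤ deriv u ζ := (h.sm.monotone hζ.1.le)
      have h5 : u x - u x₀ = deriv u ζ * (x - x₀) := by
        rw [hζ2, div_mul_cancel₀]
        exact sub_ne_zero.2 (ne_of_gt hlt)
      nlinarith [hζ.1, hζ.2]
  -- now squeeze
  have hub : ∀ᶠ x in atTop, Ffun r c u x ≤ Real.exp ((-2 * u x₀ + 2 * p₀ * x₀) + (σ - 2 * p₀) * x) := by
    filter_upwards [eventually_ge_atTop x₀] with x hx
    have hx0 : (0:ℝ) ≤ x := le_trans hx₀pos.le hx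
    have h1 : Ffun r c u x ≤ Real.exp (-(2 * u x)) * Real.exp (σ * x) := by
      apply mul_le_mul_of_nonneg_left (Jfun_le_exp hc hx0) (Real.exp_pos _).le
    rw [← Real.exp_add] at h1
    apply le_trans h1
    apply Real.exp_le_exp.2
    have := key x hx
    nlinarith
  have hlb : ∀ᶠ x in atTop, 0 ≤ Ffun r c u x := by
    filter_upwards [eventually_ge_atTop (0:ℝ)] with x hx
    exact mul_nonneg (Real.exp_pos _).le (Jfun_nonneg hc hx)
  have htt : Tendsto (fun x => Real.exp ((-2 * u x₀ + 2 * p₀ * x₀) + (σ - 2 * p₀) * x)) atTop (nhds 0) := by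
    apply Real.tendsto_exp_atBot.comp
    apply tendsto_atBot_add_const_left
    have hk : σ - 2 * p₀ < 0 := by simp only [hp₀]; linarith
    exact (tendsto_const_mul_atBot_of_neg (l := atTop) (f := fun x : ℝ => x) hk).2 tendsto_id
  exact tendsto_of_tendsto_of_tendsto_of_le_of_le' tendsto_const_nhds htt hlb hub

end Sol

noncomputable def wfun (u₁ u₂ : ℝ → ℝ) (x : ℝ) : ℝ := Function.invFun (deriv u₂) (deriv u₁ x)

section W

variable {r : ℕ} {c : Fin r → ℝ} {v : ℝ → ℝ} {lam s : ℝ} {u₁ u₂ : ℝ → ℝ}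

lemma IsSolution.invFun_eq' (h₂ : IsSolution r c v lam s u₂) {q : ℝ}
    (hq : q ∈ Set.Ico 0 (lam - s)) : deriv u₂ (Function.invFun (deriv u₂) q) = q := by
  obtain ⟨a, _, ha⟩ := h₂.surj hq
  exact Function.invFun_eq ⟨a, ha⟩

lemma wfun_eq (h₁ : IsSolution r c v lam s u₁) (h₂ : IsSolution r c v lam s u₂) {x : ℝ}
    (hx : 0 ≤ x) : deriv u₂ (wfun u₁ u₂ x) = deriv u₁ x :=
  h₂.invFun_eq' (h₁.mem_Ico hx)

lemma wfun_nonneg (h₁ : IsSolution r c v lam s u₁) (h₂ : IsSolution r c v lam s u₂) {x : ℝ}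
    (hx : 0 ≤ x) : 0 ≤ wfun u₁ u₂ x := by
  apply h₂.sm.le_iff_le.1
  rw [h₂.deriv_zero, wfun_eq h₁ h₂ hx]
  exact (h₁.mem_Ico hx).1

lemma wfun_pos (h₁ : IsSolution r c v lam s u₁) (h₂ : IsSolution r c v lam s u₂) {x : ℝ}
    (hx : 0 < x) : 0 < wfun u₁ u₂ x := by
  apply h₂.sm.lt_iff_lt.1
  rw [h₂.deriv_zero, wfun_eq h₁ h₂ hx.le]
  exact h₁.deriv_pos hx

lemma wfun_zero (h₁ : IsSolution r c v lam s u₁) (h₂ : IsSolution r c v lam s u₂) :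
    wfun u₁ u₂ 0 = 0 := by
  apply h₂.sm.injective
  rw [h₂.deriv_zero, wfun_eq h₁ h₂ (le_refl 0), h₁.deriv_zero]

lemma IsSolution.inv_contAt (h₂ : IsSolution r c v lam s u₂) {q : ℝ}
    (hq : q ∈ Set.Ioo 0 (lam - s)) : ContinuousAt (Function.invFun (deriv u₂)) q := by
  set g := Function.invFun (deriv u₂) with hg
  have hgnn : ∀ y ∈ Set.Ico 0 (lam - s), 0 ≤ g y := by
    intro y hy
    apply h₂.sm.le_iff_le.1
    rw [h₂.deriv_zero, h₂.invFun_eq' hy]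
    exact hy.1
  rw [ContinuousAt]
  apply tendsto_order.2
  constructor
  · intro b hb
    rcases lt_or_ge b 0 with hb0 | hb0
    · filter_upwards [Ioo_mem_nhds hq.1 hq.2] with y hy
      exact lt_of_lt_of_le hb0 (hgnn y ⟨hy.1.le, hy.2⟩)
    · have hq2 : deriv u₂ b < q := by
        rw [← h₂.invFun_eq' ⟨hq.1.le, hq.2⟩]
        exact h₂.sm hb
      filter_upwards [Ioo_mem_nhds hq2 hq.2] with y hy
      have hy' : y ∈ Set.Ico 0 (lam - s) := ⟨le_trans ((h₂.mem_Ico hb0).1) hy.1.le, hy.2⟩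
      apply h₂.sm.lt_iff_lt.1
      rw [h₂.invFun_eq' hy']
      exact hy.1
  · intro b hb
    have hq2 : q < deriv u₂ b := by
      rw [← h₂.invFun_eq' ⟨hq.1.le, hq.2⟩]
      exact h₂.sm hb
    have hmin : q < min (lam - s) (deriv u₂ b) := lt_min hq.2 hq2
    filter_upwards [Ioo_mem_nhds hq.1 hmin] with y hy
    have hy' : y ∈ Set.Ico 0 (lam - s) := ⟨hy.1.le, lt_of_lt_of_le hy.2 (min_le_left _ _)⟩
    apply h₂.sm.lt_iff_lt.1
    rw [h₂.invFun_eq' hy']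
    exact lt_of_lt_of_le hy.2 (min_le_right _ _)

lemma wfun_contOn (h₁ : IsSolution r c v lam s u₁) (h₂ : IsSolution r c v lam s u₂) :
    ContinuousOn (wfun u₁ u₂) (Set.Ici 0) := by
  intro x hx
  rw [ContinuousWithinAt]
  apply tendsto_order.2
  have hcont : Tendsto (deriv u₁) (nhdsWithin x (Set.Ici 0)) (nhds (deriv u₁ x)) :=
    tendsto_nhdsWithin_of_tendsto_nhds (h₁.diff1.continuous.tendsto x)
  constructor
  · intro b hb
    rcases lt_or_ge b 0 with hb0 | hb0
    · filter_upwards [eventually_mem_nhdsWithin] with y hy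
      exact lt_of_lt_of_le hb0 (wfun_nonneg h₁ h₂ hy)
    · have hlt : deriv u₂ b < deriv u₁ x := by
        rw [← wfun_eq h₁ h₂ (Set.mem_Ici.1 hx)]
        exact h₂.sm hb
      filter_upwards [hcont.eventually (eventually_gt_nhds hlt), eventually_mem_nhdsWithin]
        with y hy hy0
      apply h₂.sm.lt_iff_lt.1
      rwa [wfun_eq h₁ h₂ (Set.mem_Ici.1 hy0)]
  · intro b hb
    have hlt : deriv u₁ x < deriv u₂ b := by
      rw [← wfun_eq h₁ h₂ (Set.mem_Ici.1 hx)]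
      exact h₂.sm hb
    filter_upwards [hcont.eventually (eventually_lt_nhds hlt), eventually_mem_nhdsWithin]
      with y hy hy0
    apply h₂.sm.lt_iff_lt.1
    rwa [wfun_eq h₁ h₂ (Set.mem_Ici.1 hy0)]

lemma wfun_tendsto (h₁ : IsSolution r c v lam s u₁) (h₂ : IsSolution r c v lam s u₂) :
    Tendsto (wfun u₁ u₂) atTop atTop := by
  apply tendsto_atTop.2
  intro M
  have hq : deriv u₂ (max M 0) < lam - s := h₂.deriv_lt _
  filter_upwards [h₁.tendsto_deriv.eventually (eventually_gt_nhds hq),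
    eventually_ge_atTop (0:ℝ)] with x hx hx0
  have : max M 0 < wfun u₁ u₂ x := by
    apply h₂.sm.lt_iff_lt.1
    rwa [wfun_eq h₁ h₂ hx0]
  exact le_of_lt (lt_of_le_of_lt (le_max_left M 0) this)

lemma hasDerivAt_wfun (h₁ : IsSolution r c v lam s u₁) (h₂ : IsSolution r c v lam s u₂)
    (hc : ∀ i, 0 < c i) (hvpos : ∀ p ∈ Set.Ioo (0:ℝ) lam, 0 < v p) (hs0 : 0 ≤ s) {x : ℝ} (hx : 0 < x) :
    HasDerivAt (wfun u₁ u₂) (Ffun r c u₁ x / Ffun r c u₂ (wfun u₁ u₂ x)) x := by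
  set q := deriv u₁ x with hqdef
  set y := wfun u₁ u₂ x with hydef
  have hy0 : 0 < y := wfun_pos h₁ h₂ hx
  have hqIoo : q ∈ Set.Ioo 0 (lam - s) := ⟨h₁.deriv_pos hx, h₁.deriv_lt x⟩
  have hψcont : ContinuousAt (Function.invFun (deriv u₂)) q := h₂.inv_contAt hqIoo
  have hgq : Function.invFun (deriv u₂) q = y := rfl
  have hd2 : HasDerivAt (deriv u₂) (deriv (deriv u₂) y) y := (h₂.diff1 y).hasDerivAt
  have hd2ne : deriv (deriv u₂) y ≠ 0 := (h₂.2.2.1 y).ne'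
  have hfg : ∀ᶠ z in nhds q, deriv u₂ (Function.invFun (deriv u₂) z) = z := by
    filter_upwards [Ioo_mem_nhds hqIoo.1 hqIoo.2] with z hz
    exact h₂.invFun_eq' ⟨hz.1.le, hz.2⟩
  have hψ : HasDerivAt (Function.invFun (deriv u₂)) (deriv (deriv u₂) y)⁻¹ q := by
    apply HasDerivAt.of_local_left_inverse hψcont _ hd2ne hfg
    rw [hgq]
    exact hd2
  have hw : HasDerivAt (wfun u₁ u₂) ((deriv (deriv u₂) y)⁻¹ * deriv (deriv u₁) x) x := by
    have := hψ.comp x (h₁.diff1 x).hasDerivAt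
    exact this
  convert hw using 1
  obtain ⟨hv1, he1⟩ := h₁.deriv2_eq hvpos hs0 hx
  obtain ⟨hv2, he2⟩ := h₂.deriv2_eq hvpos hs0 hy0
  rw [he1, he2, wfun_eq h₁ h₂ hx.le]
  have hF1 : 0 < Ffun r c u₁ x := h₁.Ffun_pos hc hx
  have hF2 : 0 < Ffun r c u₂ y := h₂.Ffun_pos hc hy0
  field_simp

end W

noncomputable def xif (u₁ u₂ : ℝ → ℝ) (x : ℝ) : ℝ := x - wfun u₁ u₂ x

noncomputable def Tf (r : ℕ) (c : Fin r → ℝ) (u₁ u₂ : ℝ → ℝ) (x : ℝ) : ℝ :=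
  Ffun r c u₁ x - Ffun r c u₂ (wfun u₁ u₂ x)

section Phase

variable {r : ℕ} {c : Fin r → ℝ} {v : ℝ → ℝ} {lam s : ℝ} {u₁ u₂ : ℝ → ℝ}

lemma xif_zero (h₁ : IsSolution r c v lam s u₁) (h₂ : IsSolution r c v lam s u₂) :
    xif u₁ u₂ 0 = 0 := by
  rw [xif, wfun_zero h₁ h₂, sub_zero]

lemma hasDerivAt_xif (h₁ : IsSolution r c v lam s u₁) (h₂ : IsSolution r c v lam s u₂)
    (hc : ∀ i, 0 < c i) (hvpos : ∀ p ∈ Set.Ioo (0:ℝ) lam, 0 < v p) (hs0 : 0 ≤ s)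
    {x : ℝ} (hx : 0 < x) :
    HasDerivAt (xif u₁ u₂) (-(Tf r c u₁ u₂ x) / Ffun r c u₂ (wfun u₁ u₂ x)) x := by
  have hw := hasDerivAt_wfun h₁ h₂ hc hvpos hs0 hx
  have := (hasDerivAt_id x).sub hw
  refine this.congr_deriv ?_
  have hF2 : 0 < Ffun r c u₂ (wfun u₁ u₂ x) := h₂.Ffun_pos hc (wfun_pos h₁ h₂ hx)
  rw [Tf]
  field_simp
  ring

lemma hasDerivAt_Tf (h₁ : IsSolution r c v lam s u₁) (h₂ : IsSolution r c v lam s u₂)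
    (hc : ∀ i, 0 < c i) (hvpos : ∀ p ∈ Set.Ioo (0:ℝ) lam, 0 < v p) (hs0 : 0 ≤ s)
    {x : ℝ} (hx : 0 < x) :
    HasDerivAt (Tf r c u₁ u₂)
      (Ffun r c u₁ x * (phiJ r c x - phiJ r c (wfun u₁ u₂ x))) x := by
  set y := wfun u₁ u₂ x with hy
  have hy0 : 0 < y := wfun_pos h₁ h₂ hx
  have hw := hasDerivAt_wfun h₁ h₂ hc hvpos hs0 hx
  have h2 := (h₂.hasDerivAt_Ffun y).comp x hw
  have h1 := h₁.hasDerivAt_Ffun x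
  have := h1.sub h2
  refine this.congr_deriv ?_
  have hJx : 0 < Jfun r c x := Jfun_pos hc hx
  have hJy : 0 < Jfun r c y := Jfun_pos hc hy0
  have hq : deriv u₂ y = deriv u₁ x := wfun_eq h₁ h₂ hx.le
  rw [phiJ, phiJ, Ffun, Ffun, hq]
  rw [← hy]
  have he1 : Real.exp (-(2 * u₁ x)) ≠ 0 := (Real.exp_pos _).ne'
  have he2 : Real.exp (-(2 * u₂ y)) ≠ 0 := (Real.exp_pos _).ne'
  field_simp
  ring

lemma Tf_tendsto (h₁ : IsSolution r c v lam s u₁) (h₂ : IsSolution r c v lam s u₂)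
    (hc : ∀ i, 0 < c i) (hlam : lam = 1 + (1/2) * ∑ i, c i) (hs1 : s < 1) :
    Tendsto (Tf r c u₁ u₂) atTop (nhds 0) := by
  have h1 := h₁.tendsto_Ffun hc hlam hs1
  have h2 := (h₂.tendsto_Ffun hc hlam hs1).comp (wfun_tendsto h₁ h₂)
  have := h1.sub h2
  simp only [sub_zero] at this
  exact this

lemma xif_contOn (h₁ : IsSolution r c v lam s u₁) (h₂ : IsSolution r c v lam s u₂) :
    ContinuousOn (xif u₁ u₂) (Set.Ici 0) :=
  continuousOn_id.sub (wfun_contOn h₁ h₂)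

/-- If `ξ > 0` on the interior then `Θ` is strictly decreasing. -/
lemma Tf_strictAntiOn (h₁ : IsSolution r c v lam s u₁) (h₂ : IsSolution r c v lam s u₂)
    (hr : 1 ≤ r) (hc : ∀ i, 0 < c i) (hvpos : ∀ p ∈ Set.Ioo (0:ℝ) lam, 0 < v p) (hs0 : 0 ≤ s)
    {a b : ℝ} (ha : 0 < a) (hξ : ∀ τ ∈ Set.Ioo a b, 0 < xif u₁ u₂ τ) :
    StrictAntiOn (Tf r c u₁ u₂) (Set.Icc a b) := by
  apply strictAntiOn_of_deriv_neg (convex_Icc a b)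
  · intro τ hτ
    have hτ0 : 0 < τ := lt_of_lt_of_le ha hτ.1
    exact (hasDerivAt_Tf h₁ h₂ hc hvpos hs0 hτ0).continuousAt.continuousWithinAt
  · intro τ hτ
    rw [interior_Icc] at hτ
    have hτ0 : 0 < τ := lt_of_lt_of_le ha hτ.1.le
    rw [(hasDerivAt_Tf h₁ h₂ hc hvpos hs0 hτ0).deriv]
    have hwlt : wfun u₁ u₂ τ < τ := by
      have := hξ τ hτ
      rw [xif] at this
      linarith
    have hw0 : 0 < wfun u₁ u₂ τ := wfun_pos h₁ h₂ hτ0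
    have hphi : phiJ r c τ < phiJ r c (wfun u₁ u₂ τ) := phiJ_strictAnti hr hc hw0 hwlt
    exact mul_neg_of_pos_of_neg (h₁.Ffun_pos hc hτ0) (by linarith)

/-- If `Θ > 0` on the interior then `ξ` is strictly decreasing. -/
lemma xif_strictAntiOn (h₁ : IsSolution r c v lam s u₁) (h₂ : IsSolution r c v lam s u₂)
    (hc : ∀ i, 0 < c i) (hvpos : ∀ p ∈ Set.Ioo (0:ℝ) lam, 0 < v p) (hs0 : 0 ≤ s)
    {a b : ℝ} (ha : 0 ≤ a) (hΘ : ∀ τ ∈ Set.Ioo a b, 0 < Tf r c u₁ u₂ τ) :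
    StrictAntiOn (xif u₁ u₂) (Set.Icc a b) := by
  apply strictAntiOn_of_deriv_neg (convex_Icc a b)
  · exact (xif_contOn h₁ h₂).mono (fun τ hτ => le_trans ha hτ.1)
  · intro τ hτ
    rw [interior_Icc] at hτ
    have hτ0 : 0 < τ := lt_of_le_of_lt ha hτ.1
    rw [(hasDerivAt_xif h₁ h₂ hc hvpos hs0 hτ0).deriv]
    apply div_neg_of_neg_of_pos
    · simpa using hΘ τ hτ
    · exact h₂.Ffun_pos hc (wfun_pos h₁ h₂ hτ0)

/-- If `Θ < 0` on the interior then `ξ` is strictly increasing. -/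
lemma xif_strictMonoOn (h₁ : IsSolution r c v lam s u₁) (h₂ : IsSolution r c v lam s u₂)
    (hc : ∀ i, 0 < c i) (hvpos : ∀ p ∈ Set.Ioo (0:ℝ) lam, 0 < v p) (hs0 : 0 ≤ s)
    {a b : ℝ} (ha : 0 < a) (hΘ : ∀ τ ∈ Set.Ioo a b, Tf r c u₁ u₂ τ < 0) :
    StrictMonoOn (xif u₁ u₂) (Set.Icc a b) := by
  apply strictMonoOn_of_deriv_pos (convex_Icc a b)
  · exact (xif_contOn h₁ h₂).mono (fun τ hτ => le_trans ha.le hτ.1)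
  · intro τ hτ
    rw [interior_Icc] at hτ
    have hτ0 : 0 < τ := lt_of_lt_of_le ha hτ.1.le
    rw [(hasDerivAt_xif h₁ h₂ hc hvpos hs0 hτ0).deriv]
    apply div_pos
    · simpa using hΘ τ hτ
    · exact h₂.Ffun_pos hc (wfun_pos h₁ h₂ hτ0)

end Phase

section Main

variable {r : ℕ} {c : Fin r → ℝ} {v : ℝ → ℝ} {lam s : ℝ} {u₁ u₂ : ℝ → ℝ}

lemma no_mixed (h₁ : IsSolution r c v lam s u₁) (h₂ : IsSolution r c v lam s u₂)
    (hr : 1 ≤ r) (hc : ∀ i, 0 < c i) (hlam : lam = 1 + (1/2) * ∑ i, c i)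
    (hvpos : ∀ p ∈ Set.Ioo (0:ℝ) lam, 0 < v p) (hs : s ∈ Set.Ico (0:ℝ) 1)
    {x₁ : ℝ} (hx₁ : 0 < x₁) (hξ : 0 ≤ xif u₁ u₂ x₁) (hΘ : Tf r c u₁ u₂ x₁ ≤ 0)
    (hne : 0 < xif u₁ u₂ x₁ ∨ Tf r c u₁ u₂ x₁ < 0) : False := by
  set ξ := xif u₁ u₂ with hxi
  set Θ := Tf r c u₁ u₂ with hT
  -- Step 1: find a strict mixed point
  obtain ⟨x₂, hx₂pos, hξ₂, hΘ₂⟩ : ∃ x₂, 0 < x₂ ∧ 0 < ξ x₂ ∧ Θ x₂ < 0 := by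
    rcases lt_or_ge (Θ x₁) 0 with hΘ1 | hΘ1
    · rcases lt_or_ge 0 (ξ x₁) with hξ1 | hξ1
      · exact ⟨x₁, hx₁, hξ1, hΘ1⟩
      · -- ξ x₁ = 0, Θ x₁ < 0 : ξ strictly increasing nearby
        have hξ0 : ξ x₁ = 0 := le_antisymm hξ1 hξ
        have hcont : ContinuousAt Θ x₁ :=
          (hasDerivAt_Tf h₁ h₂ hc hvpos hs.1 hx₁).continuousAt
        obtain ⟨ε, hε, hball⟩ := Metric.eventually_nhds_iff.1
          (hcont.eventually (eventually_lt_nhds hΘ1))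
        set δ := ε / 2 with hδ
        have hδ0 : 0 < δ := by positivity
        have hΘneg : ∀ τ ∈ Set.Ioo x₁ (x₁ + δ), Θ τ < 0 := by
          intro τ hτ
          apply hball
          rw [Real.dist_eq, abs_lt]
          constructor <;> [linarith [hτ.1]; linarith [hτ.2, hε]]
        have hmono := xif_strictMonoOn h₁ h₂ hc hvpos hs.1 hx₁ hΘneg
        have h5 : ξ x₁ < ξ (x₁ + δ) := hmono ⟨le_refl _, by linarith⟩
          ⟨by linarith, le_refl _⟩ (by linarith)
        have h6 : Θ (x₁ + δ) < 0 := by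
          apply hball
          rw [Real.dist_eq, abs_lt]
          constructor <;> simp [hδ] <;> linarith
        exact ⟨x₁ + δ, by linarith, by linarith, h6⟩
    · -- Θ x₁ = 0, so ξ x₁ > 0 : Θ strictly decreasing nearby
      have hΘ0 : Θ x₁ = 0 := le_antisymm hΘ hΘ1
      have hξ1 : 0 < ξ x₁ := by
        rcases hne with h | h
        · exact h
        · exact absurd hΘ0 (ne_of_lt h)
      have hcont : ContinuousAt ξ x₁ :=
        (hasDerivAt_xif h₁ h₂ hc hvpos hs.1 hx₁).continuousAt
      obtain ⟨ε, hε, hball⟩ := Metric.eventually_nhds_iff.1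
        (hcont.eventually (eventually_gt_nhds hξ1))
      set δ := ε / 2 with hδ
      have hδ0 : 0 < δ := by positivity
      have hξpos : ∀ τ ∈ Set.Ioo x₁ (x₁ + δ), 0 < ξ τ := by
        intro τ hτ
        apply hball
        rw [Real.dist_eq, abs_lt]
        constructor <;> [linarith [hτ.1]; linarith [hτ.2, hε]]
      have hanti := Tf_strictAntiOn h₁ h₂ hr hc hvpos hs.1 hx₁ hξpos
      have h5 : Θ (x₁ + δ) < Θ x₁ := hanti ⟨le_refl _, by linarith⟩
        ⟨by linarith, le_refl _⟩ (by linarith)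
      have h6 : 0 < ξ (x₁ + δ) := by
        apply hball
        rw [Real.dist_eq, abs_lt]
        constructor <;> simp [hδ] <;> linarith
      exact ⟨x₁ + δ, by linarith, h6, by linarith⟩
  -- Step 2: ξ > 0 on [x₂, ∞)
  have hpos : ∀ x, x₂ ≤ x → 0 < ξ x := by
    by_contra hcon
    push_neg at hcon
    obtain ⟨z, hz₂, hzneg⟩ := hcon
    set B := Set.Ici x₂ ∩ ξ ⁻¹' Set.Iic 0 with hB
    have hBne : B.Nonempty := ⟨z, hz₂, hzneg⟩
    have hBbdd : BddBelow B := ⟨x₂, fun b hb => hb.1⟩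
    have hBclosed : IsClosed B := by
      apply ContinuousOn.preimage_isClosed_of_isClosed _ isClosed_Ici isClosed_Iic
      intro τ hτ
      have hτ0 : 0 < τ := lt_of_lt_of_le hx₂pos hτ
      exact (hasDerivAt_xif h₁ h₂ hc hvpos hs.1 hτ0).continuousAt.continuousWithinAt
    set t := sInf B with ht
    have htB : t ∈ B := hBclosed.csInf_mem hBne hBbdd
    have htx₂ : x₂ < t := by
      rcases lt_or_eq_of_le (show x₂ ≤ t from htB.1) with h | h
      · exact h
      · exfalso; rw [← h] at htB; exact absurd htB.2 (not_le.2 hξ₂)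
    have hbefore : ∀ τ ∈ Set.Ioo x₂ t, 0 < ξ τ := by
      intro τ hτ
      by_contra hτneg
      push_neg at hτneg
      have : τ ∈ B := ⟨hτ.1.le, hτneg⟩
      exact absurd (csInf_le hBbdd this) (not_le.2 hτ.2)
    have hanti := Tf_strictAntiOn h₁ h₂ hr hc hvpos hs.1 hx₂pos hbefore
    have hΘneg : ∀ τ ∈ Set.Ioo x₂ t, Θ τ < 0 := by
      intro τ hτ
      have := hanti ⟨le_refl _, htx₂.le⟩ ⟨hτ.1.le, hτ.2.le⟩ hτ.1
      linarith
    have hmono := xif_strictMonoOn h₁ h₂ hc hvpos hs.1 hx₂pos hΘneg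
    have : ξ x₂ < ξ t := hmono ⟨le_refl _, htx₂.le⟩ ⟨htx₂.le, le_refl _⟩ htx₂
    have : (0:ℝ) < ξ t := lt_trans hξ₂ this
    exact absurd htB.2 (not_le.2 this)
  -- Step 3: Θ ≤ Θ x₂ < 0 eventually, contradicting Θ → 0
  have hΘle : ∀ x, x₂ ≤ x → Θ x ≤ Θ x₂ := by
    intro x hx
    rcases eq_or_lt_of_le hx with rfl | hlt
    · exact le_refl _
    · have hanti := Tf_strictAntiOn h₁ h₂ hr hc hvpos hs.1 (b := x) hx₂pos
        (fun τ hτ => hpos τ hτ.1.le)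
      exact (hanti ⟨le_refl _, hx⟩ ⟨hx, le_refl _⟩ hlt).le
  have h0le : (0:ℝ) ≤ Θ x₂ :=
    le_of_tendsto (Tf_tendsto h₁ h₂ hc hlam hs.2) (eventually_atTop.2 ⟨x₂, hΘle⟩)
  linarith

lemma poscase (h₁ : IsSolution r c v lam s u₁) (h₂ : IsSolution r c v lam s u₂)
    (hc : ∀ i, 0 < c i) (hvpos : ∀ p ∈ Set.Ioo (0:ℝ) lam, 0 < v p) (hs0 : 0 ≤ s)
    (htri : ∀ x, 0 < x → 0 < xif u₁ u₂ x → 0 < Tf r c u₁ u₂ x)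
    {x' : ℝ} (hx' : 0 < x') (hξ' : 0 < xif u₁ u₂ x') : False := by
  set ξ := xif u₁ u₂ with hxi
  set S := Set.Icc (0:ℝ) x' ∩ ξ ⁻¹' Set.Iic 0 with hS
  have hSne : S.Nonempty := ⟨0, ⟨le_refl _, hx'.le⟩, by
    simp only [Set.mem_preimage, Set.mem_Iic, hxi]
    rw [xif_zero h₁ h₂]⟩
  have hSbdd : BddAbove S := ⟨x', fun b hb => hb.1.2⟩
  have hSclosed : IsClosed S :=
    ContinuousOn.preimage_isClosed_of_isClosed
      ((xif_contOn h₁ h₂).mono (fun τ hτ => hτ.1)) isClosed_Icc isClosed_Iic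
  set α := sSup S with hα
  have hαS : α ∈ S := hSclosed.csSup_mem hSne hSbdd
  have hα0 : 0 ≤ α := hαS.1.1
  have hαx' : α < x' := by
    rcases lt_or_eq_of_le (hαS.1.2 : α ≤ x') with h | h
    · exact h
    · exfalso; rw [h] at hαS; exact absurd hαS.2 (not_le.2 hξ')
  have hafter : ∀ τ ∈ Set.Ioo α x', 0 < ξ τ := by
    intro τ hτ
    by_contra hneg
    push_neg at hneg
    have : τ ∈ S := ⟨⟨le_trans hα0 hτ.1.le, hτ.2.le⟩, hneg⟩
    exact absurd (le_csSup hSbdd this) (not_le.2 hτ.1)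
  have hΘpos : ∀ τ ∈ Set.Ioo α x', 0 < Tf r c u₁ u₂ τ := by
    intro τ hτ
    exact htri τ (lt_of_le_of_lt hα0 hτ.1) (hafter τ hτ)
  have hanti := xif_strictAntiOn h₁ h₂ hc hvpos hs0 hα0 hΘpos
  have : ξ x' < ξ α := hanti ⟨le_refl _, hαx'.le⟩ ⟨hαx'.le, le_refl _⟩ hαx'
  have hξα : ξ α ≤ 0 := hαS.2
  linarith

end Main

section Final

variable {r : ℕ} {c : Fin r → ℝ} {v : ℝ → ℝ} {lam s : ℝ} {u₁ u₂ : ℝ → ℝ}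

/-- swap identity : `wfun u₂ u₁ (wfun u₁ u₂ x) = x` for `x ≥ 0`. -/
lemma wfun_swap (h₁ : IsSolution r c v lam s u₁) (h₂ : IsSolution r c v lam s u₂)
    {x : ℝ} (hx : 0 ≤ x) : wfun u₂ u₁ (wfun u₁ u₂ x) = x := by
  apply h₁.sm.injective
  rw [wfun_eq h₂ h₁ (wfun_nonneg h₁ h₂ hx), wfun_eq h₁ h₂ hx]

lemma xif_swap (h₁ : IsSolution r c v lam s u₁) (h₂ : IsSolution r c v lam s u₂)
    {x : ℝ} (hx : 0 ≤ x) : xif u₂ u₁ (wfun u₁ u₂ x) = - xif u₁ u₂ x := by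
  rw [xif, xif, wfun_swap h₁ h₂ hx]
  ring

lemma Tf_swap (h₁ : IsSolution r c v lam s u₁) (h₂ : IsSolution r c v lam s u₂)
    {x : ℝ} (hx : 0 ≤ x) : Tf r c u₂ u₁ (wfun u₁ u₂ x) = - Tf r c u₁ u₂ x := by
  rw [Tf, Tf, wfun_swap h₁ h₂ hx]
  ring

theorem uniqueness_of_solutions'
    (hr : 1 ≤ r) (hc : ∀ i, 0 < c i)
    (hlam : lam = 1 + (1/2) * ∑ i, c i)
    (hvpos : ∀ p ∈ Set.Ioo (0:ℝ) lam, 0 < v p)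
    (hs : s ∈ Set.Ico (0:ℝ) 1)
    (h₁ : IsSolution r c v lam s u₁) (h₂ : IsSolution r c v lam s u₂) :
    u₁ = u₂ := by
  -- trichotomy helpers
  have htri₁ : ∀ x, 0 < x → 0 < xif u₁ u₂ x → 0 < Tf r c u₁ u₂ x := by
    intro x hx hξ
    by_contra hcon
    push_neg at hcon
    exact no_mixed h₁ h₂ hr hc hlam hvpos hs hx hξ.le hcon (Or.inl hξ)
  have htri₂ : ∀ y, 0 < y → 0 < xif u₂ u₁ y → 0 < Tf r c u₂ u₁ y := by
    intro y hy hξ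
    by_contra hcon
    push_neg at hcon
    exact no_mixed h₂ h₁ hr hc hlam hvpos hs hy hξ.le hcon (Or.inl hξ)
  -- every point is a double zero
  have hzero : ∀ x, 0 < x → xif u₁ u₂ x = 0 ∧ Tf r c u₁ u₂ x = 0 := by
    intro x hx
    rcases lt_trichotomy (xif u₁ u₂ x) 0 with hξ | hξ | hξ
    · -- ξ < 0 : pass to swapped pair
      exfalso
      have hy : 0 < wfun u₁ u₂ x := wfun_pos h₁ h₂ hx
      have hξ' : 0 < xif u₂ u₁ (wfun u₁ u₂ x) := by
        rw [xif_swap h₁ h₂ hx.le]; linarith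
      exact poscase h₂ h₁ hc hvpos hs.1 htri₂ hy hξ'
    · -- ξ = 0
      refine ⟨hξ, ?_⟩
      by_contra hT
      rcases lt_or_gt_of_ne hT with hT | hT
      · exact no_mixed h₁ h₂ hr hc hlam hvpos hs hx hξ.ge hT.le (Or.inr hT)
      · have hy : 0 < wfun u₁ u₂ x := wfun_pos h₁ h₂ hx
        have hξ' : xif u₂ u₁ (wfun u₁ u₂ x) = 0 := by
          rw [xif_swap h₁ h₂ hx.le, hξ, neg_zero]
        have hT' : Tf r c u₂ u₁ (wfun u₁ u₂ x) < 0 := by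
          rw [Tf_swap h₁ h₂ hx.le]; linarith
        exact no_mixed h₂ h₁ hr hc hlam hvpos hs hy hξ'.ge hT'.le (Or.inr hT')
    · exact absurd hξ (not_lt.2 (le_of_not_gt (fun hξ' =>
        poscase h₁ h₂ hc hvpos hs.1 htri₁ hx hξ')))
  -- hence u₁ = u₂ on (0,∞)
  have heq : Set.EqOn u₁ u₂ (Set.Ioi 0) := by
    intro x hx
    have hx0 : (0:ℝ) < x := hx
    obtain ⟨hξ, hT⟩ := hzero x hx0
    have hw : wfun u₁ u₂ x = x := by rw [xif] at hξ; linarith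
    rw [Tf, hw, Ffun, Ffun, sub_eq_zero] at hT
    have hJ : Jfun r c x ≠ 0 := (Jfun_pos hc hx0).ne'
    have := mul_right_cancel₀ hJ hT
    have := Real.exp_injective this
    linarith
  have hclosure : Set.EqOn u₁ u₂ (closure (Set.Ioi 0)) :=
    heq.closure h₁.diff.continuous h₂.diff.continuous
  rw [closure_Ioi] at hclosure
  funext x
  rcases le_or_gt 0 x with hx | hx
  · exact hclosure hx
  · have h1 : u₁ x = u₁ (-x) := by
      have := h₁.2.1 (-x); rwa [neg_neg] at this
    have h2 : u₂ x = u₂ (-x) := by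
      have := h₂.2.1 (-x); rwa [neg_neg] at this
    rw [h1, h2]
    exact hclosure (by linarith : (0:ℝ) ≤ -x)

end Final

theorem uniqueness_of_solutions
    (r : ℕ) (hr : 1 ≤ r) (c : Fin r → ℝ) (hc : ∀ i, 0 < c i)
    (lam : ℝ) (hlam : lam = 1 + (1/2) * ∑ i, c i)
    (v : ℝ → ℝ) (m : ℕ) (A : ℝ) (hA : 0 < A) (a bk : Fin m → ℝ)
    (hbk : ∀ k, bk k ≠ 0)
    (hv : ∀ p, v p = A * p ^ r * ∏ k, (bk k - a k * p))
    (hvpos : ∀ p ∈ Set.Ioo (0:ℝ) lam, 0 < v p)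
    (s : ℝ) (hs : s ∈ Set.Ico (0:ℝ) 1) (u₁ u₂ : ℝ → ℝ)
    (h₁ : IsSolution r c v lam s u₁) (h₂ : IsSolution r c v lam s u₂) :
    u₁ = u₂ :=
  uniqueness_of_solutions' hr hc hlam hvpos hs h₁ h₂
end

section
/- There exists ε₂ > 0, independent of s, such that for every s ∈ [0,b) and every x ∈ (0, ε₂), one has ν_s(x) > m_s + 1; in particular y_s − δ_s ≥ ε₂ for all s ∈ [0,b). -/
open Real Set Filter MeasureTheory

theorem uniform_lower_bound_on_sublevel
    (r : ℕ) (hr : 1 ≤ r) (c : Fin r → ℝ) (hc : ∀ i, 0 < c i)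
    (lam : ℝ) (hlam : lam = 1 + (1/2) * ∑ i, c i)
    (v : ℝ → ℝ) (m : ℕ) (A : ℝ) (hA : 0 < A) (a bk : Fin m → ℝ)
    (hbk : ∀ k, bk k ≠ 0)
    (hv : ∀ p, v p = A * p ^ r * ∏ k, (bk k - a k * p))
    (hvpos : ∀ p ∈ Set.Ioo (0:ℝ) lam, 0 < v p)
    (b : ℝ) (hb : b ∈ Set.Ioc (0:ℝ) 1)
    (u : ℝ → ℝ → ℝ) (hu : ∀ s ∈ Set.Ico (0:ℝ) b, IsSolution r c v lam s (u s))
    (xs ms ys ds : ℝ → ℝ)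
    (hxs : ∀ s ∈ Set.Ico (0:ℝ) b, xs s ∈ Set.Ioi (0:ℝ) ∧
      ∀ x ∈ Set.Ioi (0:ℝ), ms s ≤ 2 * u s x + jfun r c x)
    (hms : ∀ s ∈ Set.Ico (0:ℝ) b, ms s = 2 * u s (xs s) + jfun r c (xs s))
    (hds : ∀ s ∈ Set.Ico (0:ℝ) b, 0 ≤ ds s ∧
      Set.Icc (ys s - ds s) (ys s + ds s) =
        {x : ℝ | 0 < x ∧ 2 * u s x + jfun r c x ≤ ms s + 1}) :
    ∃ ε₂ > (0:ℝ), ∀ s ∈ Set.Ico (0:ℝ) b,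
      (∀ x ∈ Set.Ioo (0:ℝ) ε₂, ms s + 1 < 2 * u s x + jfun r c x) ∧
      ε₂ ≤ ys s - ds s := by
  -- λ ≥ 1
  have hlam1 : (1:ℝ) ≤ lam := by
    rw [hlam]
    have : (0:ℝ) ≤ ∑ i, c i := Finset.sum_nonneg fun i _ => (hc i).le
    linarith
  -- J 1 > 0
  have hJ1 : 0 < Jfun r c 1 := by
    apply Finset.prod_pos
    intro i _
    exact Real.sinh_pos_iff.2 (by simpa using hc i)
  set t : ℝ := Jfun r c 1 * Real.exp (-(2 * lam + 1)) with ht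
  have ht0 : 0 < t := mul_pos hJ1 (Real.exp_pos _)
  -- J is continuous, J 0 = 0, so eventually J x < t near 0
  have hJcont : Continuous (Jfun r c) := by
    apply continuous_finset_prod
    intro i _
    exact Real.continuous_sinh.comp (continuous_const.mul continuous_id)
  have hJ0 : Jfun r c 0 = 0 := by
    have hne : (Finset.univ : Finset (Fin r)).Nonempty := by
      simpa [Finset.univ_nonempty_iff] using Fin.pos_iff_nonempty.1 hr
    obtain ⟨i, hi⟩ := hne
    exact Finset.prod_eq_zero hi (by simp)
  have hev : ∀ᶠ x in nhds (0:ℝ), Jfun r c x < t := by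
    have : Filter.Tendsto (Jfun r c) (nhds 0) (nhds (Jfun r c 0)) :=
      hJcont.continuousAt (x := (0:ℝ))
    rw [hJ0] at this
    exact this.eventually_lt_const ht0
  obtain ⟨ε, hε0, hε⟩ := Metric.eventually_nhds_iff.1 hev
  refine ⟨min ε 1, lt_min hε0 one_pos, ?_⟩
  intro s hs
  have hkey : ∀ x ∈ Set.Ioo (0:ℝ) (min ε 1), ms s + 1 < 2 * u s x + jfun r c x := by
    intro x hx
    obtain ⟨hx0, hxlt⟩ := hx
    have hx1 : x < 1 := lt_of_lt_of_le hxlt (min_le_right _ _)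
    have hxε : |x - 0| < ε := by
      rw [sub_zero, abs_of_pos hx0]
      exact lt_of_lt_of_le hxlt (min_le_left _ _)
    have hJx_lt : Jfun r c x < t := hε hxε
    have hJx_pos : 0 < Jfun r c x := by
      apply Finset.prod_pos
      intro i _
      exact Real.sinh_pos_iff.2 (mul_pos (hc i) hx0)
    -- j x > j 1 + 2λ + 1
    have hlogt : Real.log t = Real.log (Jfun r c 1) + (-(2 * lam + 1)) := by
      rw [ht, Real.log_mul hJ1.ne' (Real.exp_pos _).ne', Real.log_exp]
    have hjx : jfun r c 1 + (2 * lam + 1) < jfun r c x := by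
      have := Real.log_lt_log hJx_pos hJx_lt
      rw [hlogt] at this
      unfold jfun
      linarith
    -- u s 1 - u s x ≤ lam via MVT
    obtain ⟨hC, -, -, himg, -⟩ := hu s hs
    have hdiff : Differentiable ℝ (u s) := hC.differentiable (by simp)
    obtain ⟨ξ, hξmem, hξ⟩ := exists_deriv_eq_slope (u s) hx1
      (hdiff.continuous.continuousOn) (hdiff.differentiableOn)
    have hξIci : deriv (u s) ξ ∈ Set.Ico 0 (lam - s) := by
      rw [← himg]
      exact Set.mem_image_of_mem _ (le_of_lt (lt_trans hx0 hξmem.1))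
    have hs0 : 0 ≤ s := hs.1
    have hder_le : deriv (u s) ξ ≤ lam := by
      have := hξIci.2
      linarith
    have hder_ge : 0 ≤ deriv (u s) ξ := hξIci.1
    have hslope : u s 1 - u s x = deriv (u s) ξ * (1 - x) := by
      have h1x : (1:ℝ) - x ≠ 0 := by linarith
      field_simp at hξ
      linarith [hξ]
    have hub : u s 1 - u s x ≤ lam := by
      rw [hslope]
      calc deriv (u s) ξ * (1 - x) ≤ lam * (1 - x) := by
            apply mul_le_mul_of_nonneg_right hder_le; linarith
        _ ≤ lam * 1 := by apply mul_le_mul_of_nonneg_left; linarith; linarith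
        _ = lam := mul_one lam
    -- m_s ≤ 2 u s 1 + j 1
    have hm1 : ms s ≤ 2 * u s 1 + jfun r c 1 := (hxs s hs).2 1 (by norm_num)
    linarith
  refine ⟨hkey, ?_⟩
  obtain ⟨hds0, hset⟩ := hds s hs
  have hmem : ys s - ds s ∈ Set.Icc (ys s - ds s) (ys s + ds s) := by
    constructor <;> linarith
  rw [hset] at hmem
  obtain ⟨hpos, hle⟩ := hmem
  by_contra hcon
  push_neg at hcon
  exact absurd hle (not_le.2 (hkey _ ⟨hpos, hcon⟩))
end

section
/- For every ε > 0 there are constants independent of s bounding ν_s' on [ε, ∞): for all s ∈ [0,b) and all x ≥ ε one has j'(ε) ≤ ν_s'(x) < 2(1 − s) ≤ 2. -/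
open Real Set Filter MeasureTheory

lemma jfun_hasDerivAt (r : ℕ) (c : Fin r → ℝ) (hc : ∀ i, 0 < c i) {x : ℝ} (hx : 0 < x) :
    HasDerivAt (jfun r c) (-(∑ i, c i * Real.cosh (c i * x) / Real.sinh (c i * x))) x := by
  have hg : HasDerivAt (fun y => ∑ i, Real.log (Real.sinh (c i * y)))
      (∑ i, c i * Real.cosh (c i * x) / Real.sinh (c i * x)) x := by
    apply HasDerivAt.fun_sum
    intro i _
    have h1 : HasDerivAt (fun y : ℝ => c i * y) (c i) x := by
      simpa using (hasDerivAt_id x).const_mul (c i)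
    have h2 : HasDerivAt (fun y : ℝ => Real.sinh (c i * y)) (Real.cosh (c i * x) * c i) x :=
      (Real.hasDerivAt_sinh (c i * x)).comp x h1
    have hs : Real.sinh (c i * x) ≠ 0 :=
      (Real.sinh_pos_iff.mpr (mul_pos (hc i) hx)).ne'
    have := h2.log hs
    rw [show c i * Real.cosh (c i * x) / Real.sinh (c i * x) =
        Real.cosh (c i * x) * c i / Real.sinh (c i * x) by ring]
    exact this
  have heq : jfun r c =ᶠ[nhds x] fun y => -∑ i, Real.log (Real.sinh (c i * y)) := by
    filter_upwards [eventually_gt_nhds hx] with y hy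
    unfold jfun Jfun
    rw [Real.log_prod]
    intro i _
    exact (Real.sinh_pos_iff.mpr (mul_pos (hc i) hy)).ne'
  exact hg.neg.congr_of_eventuallyEq heq

lemma coth_le (a b : ℝ) (ha : 0 < a) (hab : a ≤ b) :
    Real.cosh b / Real.sinh b ≤ Real.cosh a / Real.sinh a := by
  have hsa := Real.sinh_pos_iff.mpr ha
  have hsb := Real.sinh_pos_iff.mpr (lt_of_lt_of_le ha hab)
  rw [div_le_div_iff₀ hsb hsa]
  have h : 0 ≤ Real.sinh (b - a) := Real.sinh_nonneg_iff.mpr (by linarith)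
  rw [Real.sinh_sub] at h
  nlinarith [Real.cosh_pos a, Real.cosh_pos b]

lemma one_lt_coth (t : ℝ) (ht : 0 < t) : 1 < Real.cosh t / Real.sinh t := by
  have hs := Real.sinh_pos_iff.mpr ht
  rw [one_lt_div hs]
  have := Real.cosh_sub_sinh t
  have := Real.exp_pos (-t)
  linarith

theorem uniform_derivative_bounds
    (r : ℕ) (hr : 1 ≤ r) (c : Fin r → ℝ) (hc : ∀ i, 0 < c i)
    (lam : ℝ) (hlam : lam = 1 + (1/2) * ∑ i, c i)
    (v : ℝ → ℝ) (m : ℕ) (A : ℝ) (hA : 0 < A) (a bk : Fin m → ℝ)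
    (hbk : ∀ k, bk k ≠ 0)
    (hv : ∀ p, v p = A * p ^ r * ∏ k, (bk k - a k * p))
    (hvpos : ∀ p ∈ Set.Ioo (0:ℝ) lam, 0 < v p)
    (b : ℝ) (hb : b ∈ Set.Ioc (0:ℝ) 1)
    (u : ℝ → ℝ → ℝ) (hu : ∀ s ∈ Set.Ico (0:ℝ) b, IsSolution r c v lam s (u s))
    (xs ms ys ds : ℝ → ℝ)
    (hxs : ∀ s ∈ Set.Ico (0:ℝ) b, xs s ∈ Set.Ioi (0:ℝ) ∧
      ∀ x ∈ Set.Ioi (0:ℝ), ms s ≤ 2 * u s x + jfun r c x)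
    (hms : ∀ s ∈ Set.Ico (0:ℝ) b, ms s = 2 * u s (xs s) + jfun r c (xs s))
    (hds : ∀ s ∈ Set.Ico (0:ℝ) b, 0 ≤ ds s ∧
      Set.Icc (ys s - ds s) (ys s + ds s) =
        {x : ℝ | 0 < x ∧ 2 * u s x + jfun r c x ≤ ms s + 1}) :
    ∀ ε > (0:ℝ), ∀ s ∈ Set.Ico (0:ℝ) b, ∀ x : ℝ, ε ≤ x →
      deriv (jfun r c) ε ≤ deriv (fun y => 2 * u s y + jfun r c y) x ∧
      deriv (fun y => 2 * u s y + jfun r c y) x < 2 * (1 - s) ∧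
      2 * (1 - s) ≤ 2 := by

  intro ε hε s hsmem x hx
  obtain ⟨hcd, -, -, him, -⟩ := hu s hsmem
  have hx0 : 0 < x := lt_of_lt_of_le hε hx
  have hjx := jfun_hasDerivAt r c hc hx0
  have hjε := jfun_hasDerivAt r c hc hε
  have hux : HasDerivAt (fun y => 2 * u s y) (2 * deriv (u s) x) x :=
    ((hcd.differentiable (by simp)).differentiableAt.hasDerivAt).const_mul 2
  have hν : HasDerivAt (fun y => 2 * u s y + jfun r c y)
      (2 * deriv (u s) x + -(∑ i, c i * Real.cosh (c i * x) / Real.sinh (c i * x))) x :=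
    hux.add hjx
  rw [hν.deriv, hjε.deriv]
  have hmem : deriv (u s) x ∈ Set.Ico 0 (lam - s) := by
    rw [← him]; exact Set.mem_image_of_mem _ (le_of_lt hx0)
  have hmono : ∑ i, c i * Real.cosh (c i * x) / Real.sinh (c i * x) ≤
      ∑ i, c i * Real.cosh (c i * ε) / Real.sinh (c i * ε) := by
    apply Finset.sum_le_sum
    intro i _
    rw [mul_div_assoc, mul_div_assoc]
    exact mul_le_mul_of_nonneg_left
      (coth_le (c i * ε) (c i * x) (mul_pos (hc i) hε)
        (mul_le_mul_of_nonneg_left hx (le_of_lt (hc i)))) (le_of_lt (hc i))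
  have : Nonempty (Fin r) := ⟨⟨0, hr⟩⟩
  have hlb : ∑ i, c i < ∑ i, c i * Real.cosh (c i * x) / Real.sinh (c i * x) := by
    apply Finset.sum_lt_sum_of_nonempty Finset.univ_nonempty
    intro i _
    rw [mul_div_assoc]
    nlinarith [one_lt_coth (c i * x) (mul_pos (hc i) hx0), hc i]
  refine ⟨?_, ?_, ?_⟩
  · have := hmem.1; linarith
  · have := hmem.2; rw [hlam] at this; linarith
  · have := hsmem.1; linarith
end

section
/- Set V₋ = ∫₀^{λ−b} v(p) dp and V₊ = ∫₀^{λ} v(p) dp. Then 0 < V₋, and for every s ∈ [0,b) one has V₋ ≤ ∫₀^{∞} e^{−ν_s(x)} dx ≤ V₊. -/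
open Real Set Filter MeasureTheory
open scoped Topology

theorem volume_bounds
    (r : ℕ) (hr : 1 ≤ r) (c : Fin r → ℝ) (hc : ∀ i, 0 < c i)
    (lam : ℝ) (hlam : lam = 1 + (1/2) * ∑ i, c i)
    (v : ℝ → ℝ) (m : ℕ) (A : ℝ) (hA : 0 < A) (a bk : Fin m → ℝ)
    (hbk : ∀ k, bk k ≠ 0)
    (hv : ∀ p, v p = A * p ^ r * ∏ k, (bk k - a k * p))
    (hvpos : ∀ p ∈ Set.Ioo (0:ℝ) lam, 0 < v p)
    (b : ℝ) (hb : b ∈ Set.Ioc (0:ℝ) 1)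
    (u : ℝ → ℝ → ℝ) (hu : ∀ s ∈ Set.Ico (0:ℝ) b, IsSolution r c v lam s (u s))
    (xs ms ys ds : ℝ → ℝ)
    (hxs : ∀ s ∈ Set.Ico (0:ℝ) b, xs s ∈ Set.Ioi (0:ℝ) ∧
      ∀ x ∈ Set.Ioi (0:ℝ), ms s ≤ 2 * u s x + jfun r c x)
    (hms : ∀ s ∈ Set.Ico (0:ℝ) b, ms s = 2 * u s (xs s) + jfun r c (xs s))
    (hds : ∀ s ∈ Set.Ico (0:ℝ) b, 0 ≤ ds s ∧
      Set.Icc (ys s - ds s) (ys s + ds s) =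
        {x : ℝ | 0 < x ∧ 2 * u s x + jfun r c x ≤ ms s + 1}) :
    0 < (∫ p in (0:ℝ)..(lam - b), v p) ∧
    ∀ s ∈ Set.Ico (0:ℝ) b,
      (∫ p in (0:ℝ)..(lam - b), v p) ≤
        (∫ x in Set.Ioi (0:ℝ), Real.exp (-(2 * u s x + jfun r c x))) ∧
      (∫ x in Set.Ioi (0:ℝ), Real.exp (-(2 * u s x + jfun r c x))) ≤
        ∫ p in (0:ℝ)..lam, v p := by
  haveI : Nonempty (Fin r) := Fin.pos_iff_nonempty.1 hr
  have hsum : 0 < ∑ i, c i := Finset.sum_pos (fun i _ => hc i) Finset.univ_nonempty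
  have hlam1 : (1:ℝ) < lam := by rw [hlam]; linarith
  have hvc : Continuous v := by
    have : v = fun p => A * p ^ r * ∏ k, (bk k - a k * p) := funext hv
    rw [this]
    exact (continuous_const.mul (continuous_pow r)).mul
      (continuous_finset_prod _ fun k _ =>
        continuous_const.sub (continuous_const.mul continuous_id))
  -- nonnegativity of v on [0, lam]
  have hvnn : ∀ p ∈ Icc (0:ℝ) lam, 0 ≤ v p := by
    intro p hp
    rcases eq_or_lt_of_le hp.1 with h0 | h0
    · rw [← h0, hv 0, zero_pow (by omega : r ≠ 0)]
      simp
    · rcases eq_or_lt_of_le hp.2 with h1 | h1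
      · -- p = lam : limit from the left
        subst h1
        haveI hne : Filter.NeBot (nhdsWithin p (Ioo (0:ℝ) p)) := by
          apply mem_closure_iff_nhdsWithin_neBot.1
          rw [closure_Ioo (by linarith : (0:ℝ) ≠ p)]
          exact ⟨by linarith, le_refl _⟩
        exact ge_of_tendsto (hvc.continuousAt.continuousWithinAt)
          (eventually_nhdsWithin_of_forall fun x hx => (hvpos x hx).le)
      · exact (hvpos p ⟨h0, h1⟩).le
  set V : ℝ → ℝ := fun q => ∫ p in (0:ℝ)..q, v p with hV
  have hVd : ∀ q : ℝ, HasDerivAt V (v q) q := fun q =>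
    intervalIntegral.integral_hasDerivAt_right (hvc.intervalIntegrable _ _)
      hvc.aestronglyMeasurable.stronglyMeasurableAtFilter hvc.continuousAt
  have hVmono : ∀ p q : ℝ, 0 ≤ p → p ≤ q → q ≤ lam → V p ≤ V q := by
    intro p q hp hpq hq
    have hadd : V p + ∫ x in p..q, v x = V q :=
      intervalIntegral.integral_add_adjacent_intervals (hvc.intervalIntegrable _ _)
        (hvc.intervalIntegrable _ _)
    have hnn : 0 ≤ ∫ x in p..q, v x :=
      intervalIntegral.integral_nonneg hpq fun x hx =>
        hvnn x ⟨hp.trans hx.1, hx.2.trans hq⟩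
    linarith
  have hlb : 0 < lam - b := by have := hb.2; linarith
  constructor
  · exact intervalIntegral.intervalIntegral_pos_of_pos_on (hvc.intervalIntegrable _ _)
      (fun x hx => hvpos x ⟨hx.1, by have := hb.1; linarith [hx.2]⟩) hlb
  intro s hs
  obtain ⟨hcd, _, hcc, himg, heq⟩ := hu s hs
  have hls : 0 < lam - s := by have := hs.2; linarith
  have hu'mono : StrictMono (deriv (u s)) := strictMono_of_deriv_pos hcc
  have hsm : ContDiff ℝ ((⊤ : ℕ∞) : WithTop ℕ∞) (u s) := hcd.of_le (by simp)
  have hu'diff : Differentiable ℝ (deriv (u s)) :=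
    (contDiff_infty_iff_deriv.1 hsm).2.differentiable (by simp)
  have himem : ∀ x : ℝ, 0 ≤ x → deriv (u s) x ∈ Ico 0 (lam - s) := by
    intro x hx
    rw [← himg]
    exact mem_image_of_mem _ hx
  have hu'0 : deriv (u s) 0 = 0 := by
    have h0 : (0:ℝ) ∈ Ico (0:ℝ) (lam - s) := ⟨le_refl _, hls⟩
    rw [← himg] at h0
    obtain ⟨x0, hx0, hax0⟩ := h0
    have h1 : deriv (u s) 0 ≤ deriv (u s) x0 := hu'mono.monotone (mem_Ici.1 hx0)
    rw [hax0] at h1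
    exact le_antisymm h1 (himem 0 le_rfl).1
  -- tendsto of deriv u at infinity
  have htend : Tendsto (deriv (u s)) atTop (𝓝 (lam - s)) := by
    rw [tendsto_order]
    constructor
    · intro z hz
      rcases lt_or_ge z 0 with h0 | h0
      · filter_upwards [eventually_ge_atTop (0:ℝ)] with x hx
        exact h0.trans_le (himem x hx).1
      · have hz' : z ∈ Ico (0:ℝ) (lam - s) := ⟨h0, hz⟩
        rw [← himg] at hz'
        obtain ⟨x0, _, hax0⟩ := hz'
        filter_upwards [eventually_gt_atTop x0] with x hx
        exact hax0 ▸ hu'mono hx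
    · intro z hz
      filter_upwards [eventually_ge_atTop (0:ℝ)] with x hx
      exact (himem x hx).2.trans hz
  set g : ℝ → ℝ := fun x => V (deriv (u s) x) with hgdef
  have hgc : ContinuousWithinAt g (Ici (0:ℝ)) 0 :=
    (((hVd _).continuousAt).comp (hu'diff.continuous.continuousAt)).continuousWithinAt
  have hJpos : ∀ x : ℝ, 0 < x → 0 < Jfun r c x := by
    intro x hx
    exact Finset.prod_pos fun i _ => Real.sinh_pos_iff.2 (mul_pos (hc i) hx)
  have hgd : ∀ x ∈ Ioi (0:ℝ),
      HasDerivAt g (Real.exp (-(2 * u s x + jfun r c x))) x := by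
    intro x hx
    have h1 : HasDerivAt (deriv (u s)) (deriv (deriv (u s)) x) x :=
      (hu'diff x).hasDerivAt
    have h2 := (hVd (deriv (u s) x)).comp x h1
    have h3 : v (deriv (u s) x) * deriv (deriv (u s)) x =
        Real.exp (-(2 * u s x + jfun r c x)) := by
      rw [mul_comm, heq x hx, jfun, neg_add, neg_neg,
        Real.exp_add, Real.exp_log (hJpos x hx)]
    rwa [h3] at h2
  have hg0 : g 0 = 0 := by
    rw [hgdef]
    simp only [hu'0]
    exact intervalIntegral.integral_same
  have hgt : Tendsto g atTop (𝓝 (V (lam - s))) :=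
    ((hVd (lam - s)).continuousAt.tendsto).comp htend
  have hint : (∫ x in Ioi (0:ℝ), Real.exp (-(2 * u s x + jfun r c x))) = V (lam - s) := by
    rw [integral_Ioi_of_hasDerivAt_of_nonneg hgc hgd
      (fun x _ => (Real.exp_pos _).le) hgt, hg0, sub_zero]
  rw [hint]
  have hsb : s < b := hs.2
  have hs0 : 0 ≤ s := hs.1
  have hbl : b ≤ 1 := hb.2
  constructor
  · exact hVmono (lam - b) (lam - s) (by linarith) (by linarith) (by linarith)
  · exact hVmono (lam - s) lam (by linarith) (by linarith) le_rfl
end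

section
/- Let V : [0, λ] → ℝ be defined by V(q) = ∫₀^q v(p) dp. Then V is strictly increasing, and there exists a constant C₋₁ > 0 such that the inverse function V⁻¹ : [0, V(λ)] → [0, λ] satisfies (1/C₋₁)·q^{1/(r+1)} ≤ V⁻¹(q) ≤ C₋₁·q^{1/(r+1)} for all q ∈ [0, V(λ)]. -/
open Real Set Filter MeasureTheory

theorem inverse_V_bounds
    (r : ℕ) (hr : 1 ≤ r) (c : Fin r → ℝ) (hc : ∀ i, 0 < c i)
    (lam : ℝ) (hlam : lam = 1 + (1/2) * ∑ i, c i)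
    (v : ℝ → ℝ) (m : ℕ) (A : ℝ) (hA : 0 < A) (a bk : Fin m → ℝ)
    (hbk : ∀ k, bk k ≠ 0)
    (hv : ∀ p, v p = A * p ^ r * ∏ k, (bk k - a k * p))
    (hvpos : ∀ p ∈ Set.Ioo (0:ℝ) lam, 0 < v p) :
    StrictMonoOn (fun q => ∫ p in (0:ℝ)..q, v p) (Set.Icc (0:ℝ) lam) ∧
    ∃ C > (0:ℝ), ∃ Vinv : ℝ → ℝ,
      (∀ p ∈ Set.Icc (0:ℝ) lam, Vinv (∫ t in (0:ℝ)..p, v t) = p) ∧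
      ∀ q ∈ Set.Icc (0:ℝ) (∫ t in (0:ℝ)..lam, v t),
        Vinv q ∈ Set.Icc (0:ℝ) lam ∧
        (∫ t in (0:ℝ)..(Vinv q), v t) = q ∧
        (1 / C) * q ^ ((1:ℝ) / (r + 1)) ≤ Vinv q ∧
        Vinv q ≤ C * q ^ ((1:ℝ) / (r + 1)) := by
  classical
  have hlam0 : 0 < lam := by
    have : 0 ≤ ∑ i, c i := Finset.sum_nonneg fun i _ => (hc i).le
    rw [hlam]; linarith
  set B : ℝ → ℝ := fun p => ∏ k, (bk k - a k * p) with hBdef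
  have hBc : Continuous B := by
    apply continuous_finset_prod
    intro k _
    continuity
  have hvc : Continuous v := by
    have hveq : v = fun p => A * p ^ r * B p := funext hv
    rw [hveq]
    exact (continuous_const.mul (continuous_pow r)).mul hBc
  have hint : ∀ x y : ℝ, IntervalIntegrable v volume x y :=
    fun x y => hvc.intervalIntegrable x y
  set V : ℝ → ℝ := fun q => ∫ p in (0:ℝ)..q, v p with hVdef
  have hVc : Continuous V := intervalIntegral.continuous_primitive hint 0
  have hmono : StrictMonoOn V (Set.Icc (0:ℝ) lam) := by
    intro x hx y hy hxy
    have h1 : V x + ∫ p in x..y, v p = V y :=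
      intervalIntegral.integral_add_adjacent_intervals (hint 0 x) (hint x y)
    have h2 : 0 < ∫ p in x..y, v p := by
      apply intervalIntegral.intervalIntegral_pos_of_pos_on (hint x y) _ hxy
      intro z hz
      exact hvpos z ⟨lt_of_le_of_lt hx.1 hz.1, lt_of_lt_of_le hz.2 hy.2⟩
    linarith
  -- positivity of B on [0, lam)
  have hBpos' : ∀ p ∈ Set.Ioo (0:ℝ) lam, 0 < B p := by
    intro p hp
    have h := hvpos p hp
    rw [hv] at h
    show (0:ℝ) < ∏ k, (bk k - a k * p)
    nlinarith [mul_pos hA (pow_pos hp.1 r)]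
  have hB0 : 0 < B 0 := by
    have hne : B 0 ≠ 0 := by
      simp only [hBdef, mul_zero, sub_zero]
      exact Finset.prod_ne_zero_iff.mpr fun k _ => hbk k
    have hcl : (0:ℝ) ∈ closure (Set.Ioo (0:ℝ) lam) := by
      rw [closure_Ioo (ne_of_lt hlam0)]
      exact ⟨le_refl _, hlam0.le⟩
    haveI : (nhdsWithin (0:ℝ) (Set.Ioo 0 lam)).NeBot :=
      mem_closure_iff_nhdsWithin_neBot.mp hcl
    have h0le : 0 ≤ B 0 := by
      refine ge_of_tendsto ((hBc.tendsto 0).mono_left (nhdsWithin_le_nhds (s := Set.Ioo (0:ℝ) lam))) ?_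
      filter_upwards [self_mem_nhdsWithin] with p hp
      exact (hBpos' p hp).le
    exact lt_of_le_of_ne h0le (Ne.symm hne)
  have hBpos : ∀ p ∈ Set.Ico (0:ℝ) lam, 0 < B p := by
    intro p hp
    rcases eq_or_lt_of_le hp.1 with h0 | h0
    · rw [← h0]; exact hB0
    · exact hBpos' p ⟨h0, hp.2⟩
  -- max of B on [0, lam]
  obtain ⟨pM, hpM, hM⟩ := isCompact_Icc.exists_isMaxOn
    (Set.nonempty_Icc.mpr hlam0.le) hBc.continuousOn
  rw [isMaxOn_iff] at hM
  set M := B pM with hMdef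
  have hMpos : 0 < M := lt_of_lt_of_le hB0 (hM 0 ⟨le_refl _, hlam0.le⟩)
  -- min of B on [0, lam/2]
  obtain ⟨pm, hpm, hmB⟩ := isCompact_Icc.exists_isMinOn
    (Set.nonempty_Icc.mpr (by linarith : (0:ℝ) ≤ lam/2)) hBc.continuousOn
  rw [isMinOn_iff] at hmB
  set mB := B pm with hmBdef
  have hmpos : 0 < mB :=
    hBpos pm ⟨hpm.1, lt_of_le_of_lt hpm.2 (half_lt_self hlam0)⟩
  -- upper bound for V
  set c2 : ℝ := A * M / (r + 1) with hc2def
  have hc2pos : 0 < c2 := by positivity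
  have hVub : ∀ p ∈ Set.Icc (0:ℝ) lam, V p ≤ c2 * p ^ (r + 1) := by
    intro p hp
    have h1 : V p ≤ ∫ t in (0:ℝ)..p, A * M * t ^ r := by
      apply intervalIntegral.integral_mono_on hp.1 (hint 0 p)
        ((continuous_const.mul (continuous_pow r)).intervalIntegrable 0 p)
      intro t ht
      rw [hv]
      have hBt : B t ≤ M := hM t ⟨ht.1, le_trans ht.2 hp.2⟩
      show A * t ^ r * B t ≤ A * M * t ^ r
      nlinarith [pow_nonneg ht.1 r, mul_nonneg hA.le (pow_nonneg ht.1 r)]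
    rw [intervalIntegral.integral_const_mul, integral_pow] at h1
    have : ((r:ℝ) + 1) ≠ 0 := by positivity
    rw [hc2def]
    push_cast at h1 ⊢
    rw [div_mul_eq_mul_div, le_div_iff₀ (by positivity : (0:ℝ) < (r:ℝ)+1)]
    calc V p * ((r:ℝ)+1) ≤ (A * M * ((p ^ (r+1) - 0 ^ (r+1)) / ((r:ℝ)+1))) * ((r:ℝ)+1) := by
          apply mul_le_mul_of_nonneg_right h1 (by positivity)
      _ = A * M * p ^ (r+1) := by field_simp; simp
  -- lower bound for V on [0, lam/2]
  have hVlb' : ∀ p ∈ Set.Icc (0:ℝ) (lam/2), A * mB / (r+1) * p ^ (r + 1) ≤ V p := by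
    intro p hp
    have h1 : (∫ t in (0:ℝ)..p, A * mB * t ^ r) ≤ V p := by
      apply intervalIntegral.integral_mono_on hp.1
        ((continuous_const.mul (continuous_pow r)).intervalIntegrable 0 p) (hint 0 p)
      intro t ht
      rw [hv]
      have hBt : mB ≤ B t := hmB t ⟨ht.1, le_trans ht.2 hp.2⟩
      show A * mB * t ^ r ≤ A * t ^ r * B t
      nlinarith [pow_nonneg ht.1 r, mul_nonneg hA.le (pow_nonneg ht.1 r)]
    rw [intervalIntegral.integral_const_mul, integral_pow] at h1
    push_cast at h1 ⊢
    rw [div_mul_eq_mul_div, div_le_iff₀ (by positivity : (0:ℝ) < (r:ℝ)+1)]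
    calc A * mB * p ^ (r+1) = (A * mB * ((p ^ (r+1) - 0 ^ (r+1)) / ((r:ℝ)+1))) * ((r:ℝ)+1) := by
          field_simp; simp
      _ ≤ V p * ((r:ℝ)+1) := mul_le_mul_of_nonneg_right h1 (by positivity)
  -- global lower bound
  set c1 : ℝ := A * mB / (r+1) / 2 ^ (r+1) with hc1def
  have hc1pos : 0 < c1 := by positivity
  have hVlb : ∀ p ∈ Set.Icc (0:ℝ) lam, c1 * p ^ (r + 1) ≤ V p := by
    intro p hp
    have hkey : A * mB / (r+1) * (p/2) ^ (r+1) ≤ V p := by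
      rcases le_or_gt p (lam/2) with hple | hpgt
      · calc A * mB / (r+1) * (p/2) ^ (r+1) ≤ A * mB / (r+1) * p ^ (r+1) := by
              apply mul_le_mul_of_nonneg_left (pow_le_pow_left₀ (by linarith [hp.1]) (by linarith [hp.1]) _) (by positivity)
          _ ≤ V p := hVlb' p ⟨hp.1, hple⟩
      · have h1 : A * mB / (r+1) * (p/2) ^ (r+1) ≤ A * mB / (r+1) * (lam/2) ^ (r+1) := by
          apply mul_le_mul_of_nonneg_left (pow_le_pow_left₀ (by linarith [hp.1]) (by linarith [hp.2]) _) (by positivity)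
        have h2 : A * mB / (r+1) * (lam/2) ^ (r+1) ≤ V (lam/2) :=
          hVlb' (lam/2) ⟨by linarith, le_refl _⟩
        have h3 : V (lam/2) ≤ V p :=
          (hmono.monotoneOn) ⟨by linarith, by linarith⟩ hp hpgt.le
        linarith
    calc c1 * p ^ (r+1) = A * mB / (r+1) * (p/2) ^ (r+1) := by
          rw [hc1def, div_pow]; ring
      _ ≤ V p := hkey
  have hV0 : V 0 = 0 := intervalIntegral.integral_same
  -- construction of the inverse
  have hsurj : ∀ q ∈ Set.Icc (0:ℝ) (V lam), ∃ p ∈ Set.Icc (0:ℝ) lam, V p = q := by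
    intro q hq
    have h1 : q ∈ Set.Icc (V 0) (V lam) := by rw [hV0]; exact hq
    obtain ⟨p, hp, hpq⟩ := intermediate_value_Icc hlam0.le hVc.continuousOn h1
    exact ⟨p, hp, hpq⟩
  set Vinv : ℝ → ℝ := fun q =>
    if h : ∃ p ∈ Set.Icc (0:ℝ) lam, V p = q then h.choose else 0 with hVinvdef
  have hVinv_spec : ∀ q, (∃ p ∈ Set.Icc (0:ℝ) lam, V p = q) →
      Vinv q ∈ Set.Icc (0:ℝ) lam ∧ V (Vinv q) = q := by
    intro q h
    rw [hVinvdef]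
    simp only [dif_pos h]
    exact ⟨h.choose_spec.1, h.choose_spec.2⟩
  have hleft : ∀ p ∈ Set.Icc (0:ℝ) lam, Vinv (V p) = p := by
    intro p hp
    have h : ∃ p' ∈ Set.Icc (0:ℝ) lam, V p' = V p := ⟨p, hp, rfl⟩
    obtain ⟨hmem, heq⟩ := hVinv_spec (V p) h
    exact hmono.injOn hmem hp heq
  -- powers helper
  have hrne : ((r:ℝ) + 1) ≠ 0 := by positivity
  have hepow : ∀ x : ℝ, 0 ≤ x → (x ^ (r+1)) ^ ((1:ℝ)/((r:ℝ)+1)) = x := by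
    intro x hx
    rw [← Real.rpow_natCast x (r+1), ← Real.rpow_mul hx]
    have : ((r:ℕ)+1 : ℝ) * ((1:ℝ)/((r:ℝ)+1)) = 1 := by
      push_cast; field_simp
    push_cast
    rw [this, Real.rpow_one]
  set e : ℝ := (1:ℝ)/((r:ℝ)+1) with hedef
  have hepos : 0 < e := by positivity
  set C : ℝ := max (c2 ^ e) (c1 ^ (-e)) with hCdef
  have hCpos : 0 < C := lt_of_lt_of_le (Real.rpow_pos_of_pos hc2pos e) (le_max_left _ _)
  refine ⟨hmono, C, hCpos, Vinv, hleft, ?_⟩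
  intro q hq
  obtain ⟨hmem, heq⟩ := hVinv_spec q (hsurj q hq)
  refine ⟨hmem, heq, ?_, ?_⟩
  · -- lower bound: (1/C) q^e ≤ Vinv q
    set p := Vinv q with hpdef
    have hub : q ≤ c2 * p ^ (r+1) := heq ▸ hVub p hmem
    have h1 : q ^ e ≤ (c2 * p ^ (r+1)) ^ e :=
      Real.rpow_le_rpow hq.1 hub hepos.le
    have h2 : (c2 * p ^ (r+1)) ^ e = c2 ^ e * p := by
      rw [Real.mul_rpow hc2pos.le (pow_nonneg hmem.1 _), hepow p hmem.1]
    have h3 : q ^ e ≤ C * p := by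
      rw [h2] at h1
      calc q ^ e ≤ c2 ^ e * p := h1
        _ ≤ C * p := mul_le_mul_of_nonneg_right (le_max_left _ _) hmem.1
    rw [div_mul_eq_mul_div, div_le_iff₀ hCpos, one_mul]
    linarith [h3]
  · -- upper bound: Vinv q ≤ C q^e
    set p := Vinv q with hpdef
    have hlb : c1 * p ^ (r+1) ≤ q := heq ▸ hVlb p hmem
    have h1 : (c1 * p ^ (r+1)) ^ e ≤ q ^ e :=
      Real.rpow_le_rpow (mul_nonneg hc1pos.le (pow_nonneg hmem.1 _)) hlb hepos.le
    have h2 : (c1 * p ^ (r+1)) ^ e = c1 ^ e * p := by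
      rw [Real.mul_rpow hc1pos.le (pow_nonneg hmem.1 _), hepow p hmem.1]
    rw [h2] at h1
    have h3 : p ≤ c1 ^ (-e) * q ^ e := by
      rw [Real.rpow_neg hc1pos.le, inv_mul_eq_div,
        le_div_iff₀ (Real.rpow_pos_of_pos hc1pos e)]
      linarith [h1]
    calc p ≤ c1 ^ (-e) * q ^ e := h3
      _ ≤ C * q ^ e := mul_le_mul_of_nonneg_right (le_max_right _ _)
          (Real.rpow_nonneg hq.1 e)
end

section
/- Let s ∈ [0,1), let u be a solution at level s, set ν(x) = 2u(x) + j(x), and let x₀ ∈ (0,∞) be the unique minimizer of ν. Suppose l₁ > 0 and l₀ ∈ ℝ are such that ν(x) ≥ l₁·|x − x₀| + l₀ for all x > 0, and let C₋₁ > 0 be a constant such that the inverse of V(q) = ∫₀^q v(p) dp satisfies V⁻¹(q) ≤ C₋₁·q^{1/(r+1)} on [0, V(λ)] and C₋₁·V(λ)^{1/(r+1)} ≥ λ. Then for all x ∈ [0, x₀]: u'(x) ≤ C₋₁·(e^{−l₀}/l₁)^{1/(r+1)}·e^{l₁(x − x₀)/(r+1)}. -/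
open Real Set Filter MeasureTheory

theorem derivative_decay_bound
    (r : ℕ) (hr : 1 ≤ r) (c : Fin r → ℝ) (hc : ∀ i, 0 < c i)
    (lam : ℝ) (hlam : lam = 1 + (1/2) * ∑ i, c i)
    (v : ℝ → ℝ) (m : ℕ) (A : ℝ) (hA : 0 < A) (a bk : Fin m → ℝ)
    (hbk : ∀ k, bk k ≠ 0)
    (hv : ∀ p, v p = A * p ^ r * ∏ k, (bk k - a k * p))
    (hvpos : ∀ p ∈ Set.Ioo (0:ℝ) lam, 0 < v p)
    (s : ℝ) (hs : s ∈ Set.Ico (0:ℝ) 1) (u : ℝ → ℝ)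
    (hu : IsSolution r c v lam s u)
    (x₀ : ℝ) (hx₀ : x₀ ∈ Set.Ioi (0:ℝ))
    (hmin : ∀ x ∈ Set.Ioi (0:ℝ), 2 * u x₀ + jfun r c x₀ ≤ 2 * u x + jfun r c x)
    (huniq : ∀ x ∈ Set.Ioi (0:ℝ),
      (∀ y ∈ Set.Ioi (0:ℝ), 2 * u x + jfun r c x ≤ 2 * u y + jfun r c y) → x = x₀)
    (l₁ : ℝ) (hl₁ : 0 < l₁) (l₀ : ℝ)
    (hlin : ∀ x : ℝ, 0 < x → l₁ * |x - x₀| + l₀ ≤ 2 * u x + jfun r c x)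
    (C : ℝ) (hC : 0 < C)
    (hCinv : ∀ p ∈ Set.Icc (0:ℝ) lam,
      p ≤ C * (∫ t in (0:ℝ)..p, v t) ^ ((1:ℝ) / (r + 1)))
    (hClam : lam ≤ C * (∫ t in (0:ℝ)..lam, v t) ^ ((1:ℝ) / (r + 1))) :
    ∀ x ∈ Set.Icc (0:ℝ) x₀,
      deriv u x ≤ C * (Real.exp (-l₀) / l₁) ^ ((1:ℝ) / (r + 1)) *
        Real.exp (l₁ * (x - x₀) / (r + 1)) := by
  obtain ⟨hsm, heven, hpp, himg, hode⟩ := hu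
  have hdiff : Differentiable ℝ u := hsm.differentiable (by simp)
  have h2 : ContDiff ℝ ((1:WithTop ℕ∞)+1) u := hsm.of_le (by exact WithTop.coe_le_coe.mpr le_top)
  have hsm' : ContDiff ℝ (1:WithTop ℕ∞) (deriv u) := (contDiff_succ_iff_deriv.mp h2).2.2
  have hdiff' : Differentiable ℝ (deriv u) := hsm'.differentiable one_ne_zero
  -- u'(0) = 0
  have hud0 : deriv u 0 = 0 := by
    have h1 : HasDerivAt (fun x => u (-x)) (deriv u (-(0:ℝ)) * (-1)) 0 :=
      ((hdiff _).hasDerivAt).comp 0 (hasDerivAt_neg 0)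
    have h2 : (fun x => u (-x)) = u := funext heven
    rw [h2] at h1
    have := h1.deriv
    rw [neg_zero] at this
    linarith [this]
  -- v continuous
  have hvceq : v = fun p => A * p ^ r * ∏ k, (bk k - a k * p) := funext hv
  have hvcont : Continuous v := by
    rw [hvceq]
    exact (continuous_const.mul (continuous_pow r |>.comp continuous_id)).mul
      (continuous_finset_prod _ fun k _ => continuous_const.sub (continuous_const.mul continuous_id))
  -- g and its derivative
  set g : ℝ → ℝ := fun x => ∫ t in (0:ℝ)..(deriv u x), v t with hg
  have hgderiv : ∀ x : ℝ, HasDerivAt g (v (deriv u x) * deriv (deriv u) x) x := by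
    intro x
    have hF : HasStrictDerivAt (fun q => ∫ t in (0:ℝ)..q, v t) (v (deriv u x)) (deriv u x) :=
      hvcont.integral_hasStrictDerivAt 0 (deriv u x)
    exact hF.hasDerivAt.comp x (hdiff' x).hasDerivAt
  -- h and its derivative
  set h : ℝ → ℝ := fun x => Real.exp (-l₀) / l₁ * Real.exp (l₁ * (x - x₀)) with hh
  have hhderiv : ∀ x : ℝ, HasDerivAt h (Real.exp (-(l₁ * (x₀ - x) + l₀))) x := by
    intro x
    have h1 : HasDerivAt (fun x => l₁ * (x - x₀)) l₁ x := by
      simpa using ((hasDerivAt_id x).sub_const x₀).const_mul l₁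
    have h2 := (h1.exp).const_mul (Real.exp (-l₀) / l₁)
    refine h2.congr_deriv ?_
    have he : Real.exp (-(l₁ * (x₀ - x) + l₀)) = Real.exp (-l₀) * Real.exp (l₁ * (x - x₀)) := by
      rw [← Real.exp_add]; ring_nf
    rw [he]; field_simp
  -- key inequality on derivatives on (0, x₀)
  have hJpos : ∀ x : ℝ, 0 < x → 0 < Jfun r c x := by
    intro x hx
    exact Finset.prod_pos fun i _ => Real.sinh_pos_iff.mpr (mul_pos (hc i) hx)
  have hgd_eq : ∀ x : ℝ, 0 < x → v (deriv u x) * deriv (deriv u) x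
      = Real.exp (-(2 * u x + jfun r c x)) := by
    intro x hx
    rw [mul_comm, hode x hx, jfun, neg_add, neg_neg, Real.exp_add,
      Real.exp_log (hJpos x hx)]
  -- monotonicity of h - g on [0, x₀]
  have hx₀pos : 0 < x₀ := hx₀
  have hmono : MonotoneOn (fun x => h x - g x) (Icc 0 x₀) := by
    apply monotoneOn_of_deriv_nonneg (convex_Icc 0 x₀)
    · exact (Differentiable.continuous (fun x =>
        ((hhderiv x).sub (hgderiv x)).differentiableAt)).continuousOn
    · intro x _
      exact ((hhderiv x).sub (hgderiv x)).differentiableAt.differentiableWithinAt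
    · intro x hx
      rw [interior_Icc] at hx
      rw [show (fun x => h x - g x) = h - g from rfl, ((hhderiv x).sub (hgderiv x)).deriv]
      rw [hgd_eq x hx.1, sub_nonneg]
      apply Real.exp_le_exp.mpr
      have habs : |x - x₀| = x₀ - x := by
        rw [abs_of_nonpos (by linarith [hx.2])]; ring
      have := hlin x hx.1
      rw [habs] at this
      linarith
  -- g 0 = 0
  have hg0 : g 0 = 0 := by
    simp only [hg, hud0, intervalIntegral.integral_same]
  -- conclusion
  intro x hx
  have hgle : g x ≤ h x := by
    have := hmono (left_mem_Icc.mpr (le_of_lt hx₀pos)) hx hx.1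
    have hh0 : 0 ≤ h 0 := by positivity
    simp only [hg0, sub_zero] at this
    linarith
  -- deriv u x ∈ [0, lam]
  have hmem : deriv u x ∈ Ico (0:ℝ) (lam - s) := by
    rw [← himg]
    exact ⟨x, hx.1, rfl⟩
  have hp0 : 0 ≤ deriv u x := hmem.1
  have hplam : deriv u x ≤ lam := by
    have := hmem.2
    have hs0 := hs.1
    linarith
  have hgnn : 0 ≤ g x := by
    apply intervalIntegral.integral_nonneg hp0
    intro t ht
    rcases eq_or_lt_of_le ht.1 with h0 | h0
    · rw [← h0, hv]
      simp [zero_pow (by omega : r ≠ 0)]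
    · rcases lt_or_eq_of_le (le_trans ht.2 hplam) with h1 | h1
      · exact le_of_lt (hvpos t ⟨h0, h1⟩)
      · exfalso
        have : deriv u x < lam - s := hmem.2
        have : t ≤ deriv u x := ht.2
        linarith [hs.1]
  have hbase := hCinv (deriv u x) ⟨hp0, hplam⟩
  have hrpow : (g x) ^ ((1:ℝ) / (r + 1)) ≤ (h x) ^ ((1:ℝ) / (r + 1)) :=
    Real.rpow_le_rpow hgnn hgle (by positivity)
  have hfinal : deriv u x ≤ C * (h x) ^ ((1:ℝ) / (r + 1)) := by
    calc deriv u x ≤ C * (g x) ^ ((1:ℝ) / (r + 1)) := hbase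
    _ ≤ C * (h x) ^ ((1:ℝ) / (r + 1)) := by
        exact mul_le_mul_of_nonneg_left hrpow (le_of_lt hC)
  have hhrw : (h x) ^ ((1:ℝ) / (r + 1))
      = (Real.exp (-l₀) / l₁) ^ ((1:ℝ) / (r + 1)) * Real.exp (l₁ * (x - x₀) / (r + 1)) := by
    rw [hh]
    rw [Real.mul_rpow (by positivity) (le_of_lt (Real.exp_pos _))]
    congr 1
    rw [← Real.exp_mul]
    congr 1
    field_simp
  rw [hhrw, ← mul_assoc] at hfinal
  exact hfinal
end

section
/- Let s ∈ [0,1), let u be a solution at level s, set ν(x) = 2u(x) + j(x), and let x₀ ∈ (0,∞) be the unique minimizer of ν. Suppose l₁ > 0 and l₀ ∈ ℝ are such that ν(x) ≥ l₁·|x − x₀| + l₀ for all x > 0, and let C₋₁ > 0 be a constant such that the inverse of V(q) = ∫₀^q v(p) dp satisfies V⁻¹(q) ≤ C₋₁·q^{1/(r+1)} on [0, V(λ)] and C₋₁·V(λ)^{1/(r+1)} ≥ λ. Then for all x ∈ [0, x₀]: 0 ≤ u(x) − u(0) ≤ C₋₁·(e^{−l₀}/l₁)^{1/(r+1)}·((r+1)/l₁)·(e^{l₁(x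 − x₀)/(r+1)} − e^{−l₁ x₀/(r+1)}). -/
open Real Set Filter MeasureTheory

theorem slow_growth_bound
    (r : ℕ) (hr : 1 ≤ r) (c : Fin r → ℝ) (hc : ∀ i, 0 < c i)
    (lam : ℝ) (hlam : lam = 1 + (1/2) * ∑ i, c i)
    (v : ℝ → ℝ) (m : ℕ) (A : ℝ) (hA : 0 < A) (a bk : Fin m → ℝ)
    (hbk : ∀ k, bk k ≠ 0)
    (hv : ∀ p, v p = A * p ^ r * ∏ k, (bk k - a k * p))
    (hvpos : ∀ p ∈ Set.Ioo (0:ℝ) lam, 0 < v p)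
    (s : ℝ) (hs : s ∈ Set.Ico (0:ℝ) 1) (u : ℝ → ℝ)
    (hu : IsSolution r c v lam s u)
    (x₀ : ℝ) (hx₀ : x₀ ∈ Set.Ioi (0:ℝ))
    (hmin : ∀ x ∈ Set.Ioi (0:ℝ), 2 * u x₀ + jfun r c x₀ ≤ 2 * u x + jfun r c x)
    (huniq : ∀ x ∈ Set.Ioi (0:ℝ),
      (∀ y ∈ Set.Ioi (0:ℝ), 2 * u x + jfun r c x ≤ 2 * u y + jfun r c y) → x = x₀)
    (l₁ : ℝ) (hl₁ : 0 < l₁) (l₀ : ℝ)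
    (hlin : ∀ x : ℝ, 0 < x → l₁ * |x - x₀| + l₀ ≤ 2 * u x + jfun r c x)
    (C : ℝ) (hC : 0 < C)
    (hCinv : ∀ p ∈ Set.Icc (0:ℝ) lam,
      p ≤ C * (∫ t in (0:ℝ)..p, v t) ^ ((1:ℝ) / (r + 1)))
    (hClam : lam ≤ C * (∫ t in (0:ℝ)..lam, v t) ^ ((1:ℝ) / (r + 1))) :
    ∀ x ∈ Set.Icc (0:ℝ) x₀,
      0 ≤ u x - u 0 ∧
      u x - u 0 ≤ C * (Real.exp (-l₀) / l₁) ^ ((1:ℝ) / (r + 1)) * ((r + 1) / l₁) *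
        (Real.exp (l₁ * (x - x₀) / (r + 1)) - Real.exp (-(l₁ * x₀) / (r + 1))) := by
  obtain ⟨hsm, heven, hconv, himg, hode⟩ := hu
  have hx₀' : (0:ℝ) < x₀ := hx₀
  have hr1 : (0:ℝ) < (r:ℝ) + 1 := by positivity
  set e : ℝ := (1:ℝ) / (r + 1) with he
  have he0 : 0 ≤ e := by positivity
  -- continuity of v
  have hvcont : Continuous v := by
    have hvf : v = fun p => A * p ^ r * ∏ k, (bk k - a k * p) := funext hv
    rw [hvf]
    exact (continuous_const.mul (continuous_pow r)).mul
      (continuous_finset_prod _ fun k _ => continuous_const.sub (continuous_const.mul continuous_id))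
  -- regularity of u
  have hdu : Differentiable ℝ u := hsm.differentiable (by simp)
  have hcd := (contDiff_infty_iff_deriv.mp (hsm.of_le (by simp))).2
  have hdu2 : Differentiable ℝ (deriv u) := hcd.differentiable (by simp)
  -- derivative of u is in [0, lam)
  have hmem : ∀ y : ℝ, 0 ≤ y → 0 ≤ deriv u y ∧ deriv u y < lam := by
    intro y hy
    have : deriv u y ∈ deriv u '' Set.Ici (0:ℝ) := Set.mem_image_of_mem _ hy
    rw [himg] at this
    exact ⟨this.1, lt_of_lt_of_le this.2 (by linarith [hs.1])⟩
  -- deriv u 0 = 0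
  have hdu0 : deriv u 0 = 0 := by
    have h1 : (fun x => u (-x)) = u := funext heven
    have h2 : deriv u 0 = -deriv u 0 := by
      conv_lhs => rw [← h1]
      rw [deriv_comp_neg, neg_zero]
    linarith
  -- V and its derivative
  set V : ℝ → ℝ := fun q => ∫ t in (0:ℝ)..q, v t with hV
  have hVd : ∀ q : ℝ, HasDerivAt V (v q) q := fun q =>
    intervalIntegral.integral_hasDerivAt_right (hvcont.intervalIntegrable 0 q)
      hvcont.aestronglyMeasurable.stronglyMeasurableAtFilter hvcont.continuousAt
  have hgd : ∀ y : ℝ, HasDerivAt (fun z => V (deriv u z))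
      (v (deriv u y) * deriv (deriv u) y) y := fun y =>
    (hVd (deriv u y)).comp y (hdu2 y).hasDerivAt
  -- positivity of J on (0,∞) and the exponential form of the ODE
  have hJpos : ∀ y : ℝ, 0 < y → 0 < Jfun r c y := by
    intro y hy
    exact Finset.prod_pos fun i _ => Real.sinh_pos_iff.mpr (mul_pos (hc i) hy)
  have hodeexp : ∀ y : ℝ, 0 < y →
      v (deriv u y) * deriv (deriv u) y = Real.exp (-(2 * u y + jfun r c y)) := by
    intro y hy
    rw [mul_comm, hode y hy, jfun,
      show -(2 * u y + -Real.log (Jfun r c y)) = -(2 * u y) + Real.log (Jfun r c y) by ring,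
      Real.exp_add, Real.exp_log (hJpos y hy)]
  -- nonnegativity of V at deriv u points
  have hVnn : ∀ y : ℝ, 0 ≤ y → 0 ≤ V (deriv u y) := by
    intro y hy
    obtain ⟨h1, h2⟩ := hmem y hy
    refine intervalIntegral.integral_nonneg h1 ?_
    intro t ht
    rcases eq_or_lt_of_le ht.1 with h | h
    · rw [hv, ← h]
      simp [zero_pow (by omega : r ≠ 0)]
    · exact le_of_lt (hvpos t ⟨h, lt_of_le_of_lt ht.2 h2⟩)
  -- first comparison: V (deriv u x) ≤ M x on [0, x₀]
  set D : ℝ := Real.exp (-l₀) / l₁ with hD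
  have hDpos : 0 < D := div_pos (Real.exp_pos _) hl₁
  set M : ℝ → ℝ := fun y => D * (Real.exp (l₁ * (y - x₀)) - Real.exp (-(l₁ * x₀))) with hM
  have hMd : ∀ y : ℝ, HasDerivAt M (D * (Real.exp (l₁ * (y - x₀)) * (l₁ * 1))) y := by
    intro y
    exact ((((hasDerivAt_id y).sub_const x₀).const_mul l₁).exp.sub_const _).const_mul D
  have hFd : ∀ y : ℝ, HasDerivAt (fun z => M z - V (deriv u z))
      (D * (Real.exp (l₁ * (y - x₀)) * (l₁ * 1)) - v (deriv u y) * deriv (deriv u) y) y :=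
    fun y => (hMd y).sub (hgd y)
  have hcomp1 : ∀ y ∈ Set.Icc (0:ℝ) x₀, V (deriv u y) ≤ M y := by
    have hmono : MonotoneOn (fun z => M z - V (deriv u z)) (Set.Icc 0 x₀) := by
      apply monotoneOn_of_deriv_nonneg (convex_Icc 0 x₀)
      · exact fun y _ => ((hFd y).continuousAt).continuousWithinAt
      · exact fun y _ => ((hFd y).differentiableAt).differentiableWithinAt
      · intro y hy
        rw [interior_Icc] at hy
        rw [(hFd y).deriv]
        have hyx : |y - x₀| = x₀ - y := by
          rw [abs_of_nonpos (by linarith [hy.2])]; ring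
        have hν := hlin y hy.1
        rw [hyx] at hν
        have hle : v (deriv u y) * deriv (deriv u) y ≤ Real.exp (-l₀) * Real.exp (l₁ * (y - x₀)) := by
          rw [hodeexp y hy.1, ← Real.exp_add]
          exact Real.exp_le_exp.mpr (by nlinarith)
        have hEq : D * (Real.exp (l₁ * (y - x₀)) * (l₁ * 1))
            = Real.exp (-l₀) * Real.exp (l₁ * (y - x₀)) := by
          rw [hD]; field_simp
        rw [hEq]; linarith
    intro y hy
    have h0 : (0:ℝ) ∈ Set.Icc (0:ℝ) x₀ := ⟨le_refl _, le_of_lt hx₀'⟩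
    have h2 : M 0 - V (deriv u 0) ≤ M y - V (deriv u y) := hmono h0 hy hy.1
    have hM0 : M 0 = 0 := by
      show D * (Real.exp (l₁ * (0 - x₀)) - Real.exp (-(l₁ * x₀))) = 0
      rw [show l₁ * (0 - x₀) = -(l₁ * x₀) by ring]; ring
    have hV0 : V (deriv u 0) = 0 := by rw [hdu0, hV]; simp
    rw [hM0, hV0] at h2
    linarith
  -- pointwise bound on deriv u
  have hdubd : ∀ y ∈ Set.Icc (0:ℝ) x₀,
      deriv u y ≤ C * D ^ e * Real.exp (l₁ * (y - x₀) / (r + 1)) := by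
    intro y hy
    obtain ⟨h1, h2⟩ := hmem y hy.1
    have step1 : deriv u y ≤ C * (V (deriv u y)) ^ e :=
      hCinv (deriv u y) ⟨h1, le_of_lt h2⟩
    have step2 : (V (deriv u y)) ^ e ≤ (D * Real.exp (l₁ * (y - x₀))) ^ e := by
      apply Real.rpow_le_rpow (hVnn y hy.1) _ he0
      calc V (deriv u y) ≤ M y := hcomp1 y hy
        _ ≤ D * Real.exp (l₁ * (y - x₀)) := by
            show D * (Real.exp (l₁ * (y - x₀)) - Real.exp (-(l₁ * x₀))) ≤ _
            nlinarith [Real.exp_pos (-(l₁ * x₀)), hDpos]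
    have step3 : (D * Real.exp (l₁ * (y - x₀))) ^ e
        = D ^ e * Real.exp (l₁ * (y - x₀) / (r + 1)) := by
      rw [Real.mul_rpow (le_of_lt hDpos) (le_of_lt (Real.exp_pos _)),
        Real.rpow_def_of_pos (Real.exp_pos _), Real.log_exp, he]
      ring_nf
    calc deriv u y ≤ C * (V (deriv u y)) ^ e := step1
      _ ≤ C * ((D * Real.exp (l₁ * (y - x₀))) ^ e) := by
          exact mul_le_mul_of_nonneg_left step2 (le_of_lt hC)
      _ = C * D ^ e * Real.exp (l₁ * (y - x₀) / (r + 1)) := by rw [step3]; ring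
  -- second comparison
  set K : ℝ := C * D ^ e with hK
  have hK0 : 0 ≤ K := mul_nonneg (le_of_lt hC) (Real.rpow_nonneg (le_of_lt hDpos) e)
  set G : ℝ → ℝ := fun y => K * (((r:ℝ) + 1) / l₁) *
      (Real.exp (l₁ * (y - x₀) / (r + 1)) - Real.exp (-(l₁ * x₀) / (r + 1))) - (u y - u 0)
    with hG
  have hGd : ∀ y : ℝ, HasDerivAt G
      (K * (((r:ℝ) + 1) / l₁) * (Real.exp (l₁ * (y - x₀) / (r + 1)) * (l₁ * 1 / (r + 1)))
        - deriv u y) y := by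
    intro y
    have hinner : HasDerivAt (fun z => l₁ * (z - x₀) / (r + 1)) (l₁ * 1 / (r + 1)) y :=
      (((hasDerivAt_id y).sub_const x₀).const_mul l₁).div_const _
    exact ((((hinner.exp).sub_const _).const_mul _)).sub
      (((hdu y).hasDerivAt).sub_const (u 0))
  have hGmono : MonotoneOn G (Set.Icc 0 x₀) := by
    apply monotoneOn_of_deriv_nonneg (convex_Icc 0 x₀)
    · exact fun y _ => ((hGd y).continuousAt).continuousWithinAt
    · exact fun y _ => ((hGd y).differentiableAt).differentiableWithinAt
    · intro y hy
      rw [interior_Icc] at hy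
      rw [(hGd y).deriv]
      have hb := hdubd y ⟨le_of_lt hy.1, le_of_lt hy.2⟩
      have hEq : K * (((r:ℝ) + 1) / l₁) * (Real.exp (l₁ * (y - x₀) / (r + 1)) * (l₁ * 1 / (r + 1)))
          = K * Real.exp (l₁ * (y - x₀) / (r + 1)) := by
        field_simp
      rw [hEq]; linarith
  intro x hx
  constructor
  · -- monotonicity of u
    have humono : MonotoneOn u (Set.Icc 0 x₀) := by
      apply monotoneOn_of_deriv_nonneg (convex_Icc 0 x₀)
      · exact hdu.continuous.continuousOn
      · exact hdu.differentiableOn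
      · intro y hy
        rw [interior_Icc] at hy
        exact (hmem y (le_of_lt hy.1)).1
    have := humono ⟨le_refl _, le_of_lt hx₀'⟩ hx hx.1
    linarith
  · have h0 : (0:ℝ) ∈ Set.Icc (0:ℝ) x₀ := ⟨le_refl _, le_of_lt hx₀'⟩
    have hmx := hGmono h0 hx hx.1
    have hG0 : G 0 = 0 := by
      show K * (((r:ℝ) + 1) / l₁) *
        (Real.exp (l₁ * (0 - x₀) / (r + 1)) - Real.exp (-(l₁ * x₀) / (r + 1))) - (u 0 - u 0) = 0
      rw [show l₁ * (0 - x₀) / ((r:ℝ) + 1) = -(l₁ * x₀) / ((r:ℝ) + 1) by ring]; ring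
    rw [hG0] at hmx
    have hmx2 : (0:ℝ) ≤ K * (((r:ℝ) + 1) / l₁) *
        (Real.exp (l₁ * (x - x₀) / (r + 1)) - Real.exp (-(l₁ * x₀) / (r + 1))) - (u x - u 0) := hmx
    have : u x - u 0 ≤ K * (((r:ℝ) + 1) / l₁) *
        (Real.exp (l₁ * (x - x₀) / (r + 1)) - Real.exp (-(l₁ * x₀) / (r + 1))) := by linarith
    calc u x - u 0 ≤ _ := this
      _ = C * (Real.exp (-l₀) / l₁) ^ ((1:ℝ) / (r + 1)) * ((r + 1) / l₁) *
          (Real.exp (l₁ * (x - x₀) / (r + 1)) - Real.exp (-(l₁ * x₀) / (r + 1))) := by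
        rw [hK, hD, he]
end

section
/- Let C₋₁ > 0 be a constant such that the inverse of V(q) = ∫₀^q v(p) dp satisfies (1/C₋₁)·q^{1/(r+1)} ≤ V⁻¹(q) ≤ C₋₁·q^{1/(r+1)} on [0, V(λ)] and C₋₁·V(λ)^{1/(r+1)} ≥ λ. For s ∈ [0,b) define ū_s(x) = e^{2u_s(0)/(r+1)}·(u_s(x) − u_s(0)). Then for every s ∈ [0,b) and every x ∈ [0, x_s/2]: (1/C₋₁)·e^{−2(u_s(x_s/2) − u_s(0))/(r+1)}·(∫₀^x J(y) dy)^{1/(r+1)} ≤ ū_s'(x) ≤ C₋₁·(∫₀^x J(y) dy)^{1/(r+1)}. -/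
open Real Set Filter MeasureTheory

theorem rescaled_derivative_bounds
    (r : ℕ) (hr : 1 ≤ r) (c : Fin r → ℝ) (hc : ∀ i, 0 < c i)
    (lam : ℝ) (hlam : lam = 1 + (1/2) * ∑ i, c i)
    (v : ℝ → ℝ) (m : ℕ) (A : ℝ) (hA : 0 < A) (a bk : Fin m → ℝ)
    (hbk : ∀ k, bk k ≠ 0)
    (hv : ∀ p, v p = A * p ^ r * ∏ k, (bk k - a k * p))
    (hvpos : ∀ p ∈ Set.Ioo (0:ℝ) lam, 0 < v p)
    (b : ℝ) (hb : b ∈ Set.Ioc (0:ℝ) 1)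
    (u : ℝ → ℝ → ℝ) (hu : ∀ s ∈ Set.Ico (0:ℝ) b, IsSolution r c v lam s (u s))
    (xs ms ys ds : ℝ → ℝ)
    (hxs : ∀ s ∈ Set.Ico (0:ℝ) b, xs s ∈ Set.Ioi (0:ℝ) ∧
      ∀ x ∈ Set.Ioi (0:ℝ), ms s ≤ 2 * u s x + jfun r c x)
    (hms : ∀ s ∈ Set.Ico (0:ℝ) b, ms s = 2 * u s (xs s) + jfun r c (xs s))
    (hds : ∀ s ∈ Set.Ico (0:ℝ) b, 0 ≤ ds s ∧
      Set.Icc (ys s - ds s) (ys s + ds s) =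
        {x : ℝ | 0 < x ∧ 2 * u s x + jfun r c x ≤ ms s + 1})
    (C : ℝ) (hC : 0 < C)
    (hCinv : ∀ p ∈ Set.Icc (0:ℝ) lam,
      (1 / C) * (∫ t in (0:ℝ)..p, v t) ^ ((1:ℝ) / (r + 1)) ≤ p ∧
      p ≤ C * (∫ t in (0:ℝ)..p, v t) ^ ((1:ℝ) / (r + 1)))
    (hClam : lam ≤ C * (∫ t in (0:ℝ)..lam, v t) ^ ((1:ℝ) / (r + 1))) :
    ∀ s ∈ Set.Ico (0:ℝ) b, ∀ x ∈ Set.Icc (0:ℝ) (xs s / 2),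
      (1 / C) * Real.exp (-(2 * (u s (xs s / 2) - u s 0)) / (r + 1)) *
          (∫ y in (0:ℝ)..x, Jfun r c y) ^ ((1:ℝ) / (r + 1)) ≤
        deriv (fun t => Real.exp (2 * u s 0 / (r + 1)) * (u s t - u s 0)) x ∧
      deriv (fun t => Real.exp (2 * u s 0 / (r + 1)) * (u s t - u s 0)) x ≤
        C * (∫ y in (0:ℝ)..x, Jfun r c y) ^ ((1:ℝ) / (r + 1)) := by
  intro s hs x hx
  obtain ⟨hsmooth, heven, hu'', himg, hode⟩ := hu s hs
  obtain ⟨hx0, hxle⟩ := hx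
  have hxs0 : 0 < xs s := (hxs s hs).1
  have hxh : (0:ℝ) ≤ xs s / 2 := by linarith
  set U := u s with hU
  have hdiffU : Differentiable ℝ U := hsmooth.differentiable (by simp)
  have hsm : ContDiff ℝ (↑(⊤:ℕ∞)) U := hsmooth.of_le (by simp)
  have hC1 : ContDiff ℝ (↑(⊤:ℕ∞)) (deriv U) := (contDiff_infty_iff_deriv.mp hsm).2
  have hdiffU' : Differentiable ℝ (deriv U) := hC1.differentiable (by simp)
  have hmemIco : ∀ y : ℝ, 0 ≤ y → deriv U y ∈ Set.Ico 0 (lam - s) := by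
    intro y hy; rw [← himg]; exact ⟨y, hy, rfl⟩
  -- u'(0) = 0
  have h0 : deriv U 0 = 0 := by
    have h1 : HasDerivAt U (deriv U 0) 0 := (hdiffU 0).hasDerivAt
    have hneg : HasDerivAt (fun x : ℝ => -x) (-1) 0 := by
      simpa using (hasDerivAt_neg (0:ℝ))
    have h2 : HasDerivAt (fun x => U (-x)) (deriv U 0 * (-1)) 0 := by
      have h1' : HasDerivAt U (deriv U 0) (-(0:ℝ)) := by simpa using h1
      exact HasDerivAt.comp 0 h1' hneg
    have h3 : (fun x => U (-x)) = U := funext heven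
    rw [h3] at h2
    have := h2.unique h1
    linarith
  -- continuity of v and J
  have hvc : Continuous v := by
    have : v = fun p => A * p ^ r * ∏ k, (bk k - a k * p) := funext hv
    rw [this]
    exact (continuous_const.mul (continuous_pow r)).mul
      (continuous_finset_prod _ fun k _ => continuous_const.sub (continuous_const.mul continuous_id))
  have hJcont : Continuous (Jfun r c) := by
    unfold Jfun
    exact continuous_finset_prod _ fun i _ =>
      Real.continuous_sinh.comp (continuous_const.mul continuous_id)
  have hFcont : Continuous (fun y => Real.exp (-(2 * U y)) * Jfun r c y) :=
    ((Real.continuous_exp.comp ((continuous_const.mul hdiffU.continuous).neg))).mul hJcont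
  -- derivative of the primitive V
  have hVd : ∀ q : ℝ, HasDerivAt (fun q => ∫ t in (0:ℝ)..q, v t) (v q) q := fun q =>
    intervalIntegral.integral_hasDerivAt_right (hvc.intervalIntegrable _ _)
      (hvc.stronglyMeasurableAtFilter _ _) hvc.continuousAt
  set g : ℝ → ℝ := fun y => ∫ t in (0:ℝ)..(deriv U y), v t with hg
  have hgd : ∀ y : ℝ, HasDerivAt g (v (deriv U y) * deriv (deriv U) y) y := fun y =>
    HasDerivAt.comp y (hVd (deriv U y)) ((hdiffU' y).hasDerivAt)
  -- v 0 = 0 and J 0 = 0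
  have hv0 : v 0 = 0 := by
    rw [hv]; rcases Nat.exists_eq_add_of_le hr with ⟨k, hk⟩
    simp [hk, pow_succ, pow_zero, zero_pow]
  have hJ0 : Jfun r c 0 = 0 := by
    unfold Jfun
    apply Finset.prod_eq_zero (Finset.mem_univ ⟨0, hr⟩)
    simp
  -- FTC : g x = ∫_0^x e^{-2U} J
  have hftc : ∫ y in (0:ℝ)..x, Real.exp (-(2 * U y)) * Jfun r c y = g x - g 0 := by
    apply intervalIntegral.integral_eq_sub_of_hasDerivAt
    · intro y hy
      rw [Set.uIcc_of_le hx0] at hy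
      rcases eq_or_lt_of_le hy.1 with h | h
      · have : v (deriv U y) * deriv (deriv U) y = Real.exp (-(2 * U y)) * Jfun r c y := by
          rw [← h, h0, hv0, hJ0]; ring
        exact this ▸ hgd y
      · have : v (deriv U y) * deriv (deriv U) y = Real.exp (-(2 * U y)) * Jfun r c y := by
          rw [mul_comm]; exact hode y h
        exact this ▸ hgd y
    · exact hFcont.intervalIntegrable _ _
  have hg0 : g 0 = 0 := by simp [hg, h0]
  rw [hg0, sub_zero] at hftc
  -- monotonicity of U on [0, ∞)
  have hmono : MonotoneOn U (Set.Ici 0) := by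
    apply monotoneOn_of_deriv_nonneg (convex_Ici 0) hdiffU.continuous.continuousOn
      hdiffU.differentiableOn
    intro y hy
    rw [interior_Ici] at hy
    exact (hmemIco y (le_of_lt hy)).1
  -- J nonneg on [0, x]
  have hJnn : ∀ y ∈ Set.Icc (0:ℝ) x, 0 ≤ Jfun r c y := by
    intro y hy
    apply Finset.prod_nonneg
    intro i _
    have : Real.sinh 0 ≤ Real.sinh (c i * y) :=
      Real.sinh_le_sinh.2 (mul_nonneg (hc i).le hy.1)
    simpa using this
  have hInn : 0 ≤ ∫ y in (0:ℝ)..x, Jfun r c y :=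
    intervalIntegral.integral_nonneg hx0 hJnn
  -- integral bounds
  have hJint : IntervalIntegrable (Jfun r c) volume 0 x := hJcont.intervalIntegrable _ _
  have hlow : Real.exp (-(2 * U (xs s / 2))) * ∫ y in (0:ℝ)..x, Jfun r c y ≤
      ∫ y in (0:ℝ)..x, Real.exp (-(2 * U y)) * Jfun r c y := by
    rw [← intervalIntegral.integral_const_mul]
    apply intervalIntegral.integral_mono_on hx0
      ((continuous_const.mul hJcont).intervalIntegrable _ _)
      (hFcont.intervalIntegrable _ _)
    intro y hy
    have hUy : U y ≤ U (xs s / 2) :=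
      hmono hy.1 hxh (le_trans hy.2 hxle)
    exact mul_le_mul_of_nonneg_right (Real.exp_le_exp.2 (by linarith)) (hJnn y hy)
  have hhigh : (∫ y in (0:ℝ)..x, Real.exp (-(2 * U y)) * Jfun r c y) ≤
      Real.exp (-(2 * U 0)) * ∫ y in (0:ℝ)..x, Jfun r c y := by
    rw [← intervalIntegral.integral_const_mul]
    apply intervalIntegral.integral_mono_on hx0
      (hFcont.intervalIntegrable _ _)
      ((continuous_const.mul hJcont).intervalIntegrable _ _)
    intro y hy
    have hUy : U 0 ≤ U y := hmono (le_refl (0:ℝ)) hy.1 hy.1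
    exact mul_le_mul_of_nonneg_right (Real.exp_le_exp.2 (by linarith)) (hJnn y hy)
  -- inverse bounds at p = deriv U x
  have hpmem : deriv U x ∈ Set.Icc (0:ℝ) lam := by
    have := hmemIco x hx0
    exact ⟨this.1, by linarith [this.2, hs.1]⟩
  obtain ⟨hl, hrr⟩ := hCinv (deriv U x) hpmem
  have hgx : (∫ t in (0:ℝ)..(deriv U x), v t) = g x := rfl
  rw [hgx] at hl hrr
  -- derivative of the rescaled function
  have hder : deriv (fun t => Real.exp (2 * U 0 / (r + 1)) * (U t - U 0)) x
      = Real.exp (2 * U 0 / (r + 1)) * deriv U x := by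
    rw [deriv_const_mul _ ((hdiffU x).sub_const _), deriv_sub_const]
  rw [hder]
  -- abbreviations
  set ρ : ℝ := (1:ℝ) / (r + 1) with hρ
  have hρnn : 0 ≤ ρ := by positivity
  set I : ℝ := ∫ y in (0:ℝ)..x, Jfun r c y with hI
  have hlowg : Real.exp (-(2 * U (xs s / 2))) * I ≤ g x := hlow.trans (le_of_eq hftc)
  have hhighg : g x ≤ Real.exp (-(2 * U 0)) * I := (le_of_eq hftc.symm).trans hhigh
  have he1I : 0 ≤ Real.exp (-(2 * U (xs s / 2))) * I :=
    mul_nonneg (Real.exp_pos _).le hInn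
  have hgxnn : 0 ≤ g x := le_trans he1I hlowg
  have hEpos : 0 < Real.exp (2 * U 0 / (r + 1)) := Real.exp_pos _
  constructor
  · -- lower bound
    have h1 : (Real.exp (-(2 * U (xs s / 2))) * I) ^ ρ ≤ (g x) ^ ρ :=
      Real.rpow_le_rpow he1I hlowg hρnn
    have h2 : (Real.exp (-(2 * U (xs s / 2))) * I) ^ ρ
        = Real.exp (-(2 * U (xs s / 2))) ^ ρ * I ^ ρ :=
      Real.mul_rpow (Real.exp_pos _).le hInn
    have h3 : (1 / C) * (Real.exp (-(2 * U (xs s / 2))) ^ ρ * I ^ ρ) ≤ deriv U x := by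
      calc (1 / C) * (Real.exp (-(2 * U (xs s / 2))) ^ ρ * I ^ ρ)
          = (1 / C) * (Real.exp (-(2 * U (xs s / 2))) * I) ^ ρ := by rw [h2]
        _ ≤ (1 / C) * (g x) ^ ρ := by
            apply mul_le_mul_of_nonneg_left h1 (by positivity)
        _ ≤ deriv U x := hl
    have h4 : Real.exp (2 * U 0 / (r + 1)) * ((1 / C) *
        (Real.exp (-(2 * U (xs s / 2))) ^ ρ * I ^ ρ)) ≤
        Real.exp (2 * U 0 / (r + 1)) * deriv U x :=
      mul_le_mul_of_nonneg_left h3 hEpos.le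
    have e1p : Real.exp (-(2 * U (xs s / 2))) ^ ρ = Real.exp (-(2 * U (xs s / 2)) * ρ) :=
      (Real.exp_mul _ _).symm
    have key : Real.exp (2 * U 0 / (r + 1)) * Real.exp (-(2 * U (xs s / 2))) ^ ρ
        = Real.exp (-(2 * (U (xs s / 2) - U 0)) / (r + 1)) := by
      rw [e1p, ← Real.exp_add]
      congr 1
      rw [hρ]; ring
    calc (1 / C) * Real.exp (-(2 * (U (xs s / 2) - U 0)) / (r + 1)) * I ^ ρ
        = (1 / C) * (Real.exp (2 * U 0 / (r + 1)) * Real.exp (-(2 * U (xs s / 2))) ^ ρ) * I ^ ρ := by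
          rw [key]
      _ = Real.exp (2 * U 0 / (r + 1)) * ((1 / C) *
            (Real.exp (-(2 * U (xs s / 2))) ^ ρ * I ^ ρ)) := by ring
      _ ≤ Real.exp (2 * U 0 / (r + 1)) * deriv U x := h4
  · -- upper bound
    have h1 : (g x) ^ ρ ≤ (Real.exp (-(2 * U 0)) * I) ^ ρ :=
      Real.rpow_le_rpow hgxnn hhighg hρnn
    have h2 : (Real.exp (-(2 * U 0)) * I) ^ ρ = Real.exp (-(2 * U 0)) ^ ρ * I ^ ρ :=
      Real.mul_rpow (Real.exp_pos _).le hInn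
    have h3 : deriv U x ≤ C * (Real.exp (-(2 * U 0)) ^ ρ * I ^ ρ) := by
      calc deriv U x ≤ C * (g x) ^ ρ := hrr
        _ ≤ C * (Real.exp (-(2 * U 0)) * I) ^ ρ :=
            mul_le_mul_of_nonneg_left h1 hC.le
        _ = C * (Real.exp (-(2 * U 0)) ^ ρ * I ^ ρ) := by rw [h2]
    have e0p : Real.exp (-(2 * U 0)) ^ ρ = Real.exp (-(2 * U 0) * ρ) :=
      (Real.exp_mul _ _).symm
    have key2 : Real.exp (2 * U 0 / (r + 1)) * Real.exp (-(2 * U 0)) ^ ρ = 1 := by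
      rw [e0p, ← Real.exp_add]
      rw [show (2 * U 0 / (r + 1) + -(2 * U 0) * ρ : ℝ) = 0 by rw [hρ]; ring]
      exact Real.exp_zero
    calc Real.exp (2 * U 0 / (r + 1)) * deriv U x
        ≤ Real.exp (2 * U 0 / (r + 1)) * (C * (Real.exp (-(2 * U 0)) ^ ρ * I ^ ρ)) :=
          mul_le_mul_of_nonneg_left h3 hEpos.le
      _ = C * ((Real.exp (2 * U 0 / (r + 1)) * Real.exp (-(2 * U 0)) ^ ρ) * I ^ ρ) := by ring
      _ = C * I ^ ρ := by rw [key2, one_mul]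
end
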